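/- (Sign-invariance) Let X be a Banach space, 1 ≤ p < ∞, and for each dyadic cube Q ∈ Δ let u_Q ∈ L^p(ℝⁿ; X), with only finitely many u_Q nonzero. Then the three randomized quantities E‖∑_k ε_k ∑_{Q ∈ Δ_{2^k}} 1_Q u_Q‖_{L^p(ℝⁿ;X)}, E‖∑_k ε_k ∑_{Q ∈ Δ_{2^k}} h_Q u_Q‖_{L^p(ℝⁿ;X)}, and E‖∑_{Q ∈ Δ} ε_Q 1_Q u_Q‖_{L^p(ℝⁿ;X)} are pairwise comparable, with implied constants depending only on p. -/

import Mathlib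

open MeasureTheory
open scoped ENNReal

noncomputable section

/-- Expectation `E‖∑_{i∈s} ε_i f i‖` over independent random signs indexed by the finset `s`. -/
def radE {ι X : Type*} [DecidableEq ι] [NormedAddCommGroup X]
    (s : Finset ι) (f : ι → X) : ℝ :=
  ((2 : ℝ) ^ s.card)⁻¹ *
    ∑ σ : {i // i ∈ s} → Bool, ‖∑ i : {i // i ∈ s}, (if σ i then f i.1 else - f i.1)‖

/-- The dyadic cube of side `2^k` indexed by `m ∈ ℤⁿ`, i.e. `2^k([0,1)ⁿ + m)`. -/
def dyadicCube (n : ℕ) (k : ℤ) (m : Fin n → ℤ) : Set (Fin n → ℝ) :=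
  {x | ∀ i, (2 : ℝ) ^ k * (m i : ℝ) ≤ x i ∧ x i < (2 : ℝ) ^ k * ((m i : ℝ) + 1)}

/-- The integral average `⟨u⟩_S = |S|⁻¹ ∫_S u` of a vector-valued function over a set. -/
def setAvg (n : ℕ) {X : Type*} [NormedAddCommGroup X] [NormedSpace ℝ X]
    (S : Set (Fin n → ℝ)) (u : (Fin n → ℝ) → X) : X :=
  ((volume S).toReal)⁻¹ • ∫ y in S, u y

/-- `A_{2^k} u (x)`: the average of `u` over the dyadic cube of side `2^k` containing `x`. -/
def dyadicAvg (n : ℕ) {X : Type*} [NormedAddCommGroup X] [NormedSpace ℝ X]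
    (u : (Fin n → ℝ) → X) (k : ℤ) (x : Fin n → ℝ) : X :=
  setAvg n (dyadicCube n k (fun i => ⌊x i / (2 : ℝ) ^ k⌋)) u

/-- The Rademacher maximal function
`M_R u (x) = sup { E‖∑_k ε_k λ_k A_{2^k}u(x)‖ : λ finitely nonzero, ‖λ‖_{ℓ²} ≤ 1 }`. -/
def rademacherMaximal (n : ℕ) {X : Type*} [NormedAddCommGroup X] [NormedSpace ℝ X]
    (u : (Fin n → ℝ) → X) (x : Fin n → ℝ) : ℝ :=
  ⨆ p : {p : Finset ℤ × (ℤ → ℝ) // ∑ k ∈ p.1, (p.2 k) ^ 2 ≤ 1},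
    radE p.1.1 (fun k => p.1.2 k • dyadicAvg n u k x)

/-- The dyadic Hardy–Littlewood maximal function `M u (x) = sup_{Q ∋ x} ‖⟨u⟩_Q‖`. -/
def dyadicMaximal (n : ℕ) {X : Type*} [NormedAddCommGroup X] [NormedSpace ℝ X]
    (u : (Fin n → ℝ) → X) (x : Fin n → ℝ) : ℝ :=
  ⨆ k : ℤ, ‖dyadicAvg n u k x‖

/-- Random sign attached to `i` by a sign pattern `σ` on the finset `s` (`+1` off `s`). -/
def sgn {ι : Type*} [DecidableEq ι] (s : Finset ι) (σ : {i // i ∈ s} → Bool) (i : ι) : ℝ :=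
  if h : i ∈ s then (if σ ⟨i, h⟩ then 1 else -1) else 1

/-- The `L^∞`-normalized Haar function `h_Q = 1_{Q_+} − 1_{Q_−}` of the dyadic cube `Q`,
split into halves in the first coordinate. -/
def haarFn (n : ℕ) (hn : 0 < n) (q : ℤ × (Fin n → ℤ)) (x : Fin n → ℝ) : ℝ :=
  Set.indicator (dyadicCube n q.1 q.2)
    (fun y => if y ⟨0, hn⟩ < (2 : ℝ) ^ q.1 * (q.2 ⟨0, hn⟩ : ℝ) + (2 : ℝ) ^ (q.1 - 1)
      then 1 else -1) x


set_option linter.unusedSectionVars false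

def sg (b : Bool) : ℝ := if b then 1 else -1

lemma sg_mul_self (b : Bool) : sg b * sg b = 1 := by cases b <;> norm_num [sg]

lemma sg_not (b : Bool) : sg (!b) = - sg b := by cases b <;> norm_num [sg]

lemma sg_beq (a b : Bool) : sg (a == b) * sg b = sg a := by
  cases a <;> cases b <;> norm_num [sg]

lemma norm_sg_smul {Y : Type*} [NormedAddCommGroup Y] [NormedSpace ℝ Y] (b : Bool) (z : Y) :
    ‖sg b • z‖ = ‖z‖ := by cases b <;> simp [sg, norm_smul]

/-- event as a finset, with classical decidability -/
def evt {α : Type*} [Fintype α] (E : α → Prop) : Finset α :=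
  @Finset.filter _ E (Classical.decPred E) Finset.univ

lemma mem_evt {α : Type*} [Fintype α] {E : α → Prop} {a : α} : a ∈ evt E ↔ E a := by
  unfold evt
  rw [@Finset.mem_filter _ _ (Classical.decPred E)]
  simp

lemma evt_card_le {α : Type*} [Fintype α] {E F : α → Prop} (h : ∀ a, E a → F a) :
    (evt E).card ≤ (evt F).card :=
  Finset.card_le_card fun a ha => mem_evt.mpr (h a (mem_evt.mp ha))

lemma evt_card_le_add {α : Type*} [Fintype α] {E F G : α → Prop} (h : ∀ a, E a → F a ∨ G a) :
    (evt E).card ≤ (evt F).card + (evt G).card := by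
  classical
  calc (evt E).card ≤ (evt F ∪ evt G).card := by
        apply Finset.card_le_card
        intro a ha
        rcases h a (mem_evt.mp ha) with h' | h'
        · exact Finset.mem_union_left _ (mem_evt.mpr h')
        · exact Finset.mem_union_right _ (mem_evt.mpr h')
    _ ≤ _ := Finset.card_union_le _ _

lemma evt_card_equiv {α β : Type*} [Fintype α] [Fintype β] (e : α ≃ β) (E : β → Prop) :
    (evt fun a => E (e a)).card = (evt E).card := by
  classical
  have h : (evt fun a => E (e a)) = (evt E).image e.symm := by
    ext a
    rw [mem_evt, Finset.mem_image]
    constructor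
    · intro h; exact ⟨e a, mem_evt.mpr h, e.symm_apply_apply a⟩
    · rintro ⟨b, hb, rfl⟩; simpa using mem_evt.mp hb
  rw [h, Finset.card_image_of_injective _ e.symm.injective]

lemma evt_congr {α : Type*} [Fintype α] {E F : α → Prop} (h : ∀ a, E a ↔ F a) :
    evt E = evt F := by
  ext a; rw [mem_evt, mem_evt]; exact h a

lemma evt_sum_indicator {α : Type*} [Fintype α] (E : α → Prop) :
    ∑ a, Set.indicator {x | E x} (fun _ => (1 : ℝ)) a = (evt E).card := by
  classical
  rw [← Finset.sum_subset (Finset.subset_univ (evt E))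
    (fun x _ hx => Set.indicator_of_notMem (by simpa [Set.mem_setOf_eq] using (mem_evt (E := E)).not.mp hx) _)]
  rw [Finset.sum_congr rfl (fun x hx => Set.indicator_of_mem (by simpa [Set.mem_setOf_eq] using mem_evt.mp hx) _)]
  simp

/-- Markov: counting form -/
lemma evt_markov {α : Type*} [Fintype α] (f : α → ℝ) (hf : ∀ a, 0 ≤ f a) (t : ℝ) :
    ((evt fun a => t < f a).card : ℝ) * t ≤ ∑ a, f a := by
  calc ((evt fun a => t < f a).card : ℝ) * t = ∑ _a ∈ evt fun a => t < f a, t := by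
        rw [Finset.sum_const, nsmul_eq_mul]
    _ ≤ ∑ a ∈ evt fun a => t < f a, f a :=
        Finset.sum_le_sum fun a ha => (mem_evt.mp ha).le
    _ ≤ ∑ a, f a :=
        Finset.sum_le_sum_of_subset_of_nonneg (Finset.subset_univ _) fun a _ _ => hf a


section Kahane
variable {Y : Type*} [NormedAddCommGroup Y] [NormedSpace ℝ Y] {N : ℕ}

def SS (y : Fin N → Y) (σ : Fin N → Bool) : Y := ∑ i, sg (σ i) • y i

def PS (y : Fin N → Y) (j : ℕ) (σ : Fin N → Bool) : Y :=
  ∑ i ∈ Finset.univ.filter (fun i : Fin N => (i : ℕ) < j), sg (σ i) • y i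

def TL (y : Fin N → Y) (j : ℕ) (σ : Fin N → Bool) : Y :=
  ∑ i ∈ Finset.univ.filter (fun i : Fin N => ¬ (i : ℕ) < j), sg (σ i) • y i

lemma PS_add_TL (y : Fin N → Y) (j : ℕ) (σ : Fin N → Bool) :
    PS y j σ + TL y j σ = SS y σ :=
  Finset.sum_filter_add_sum_filter_not _ _ _

lemma PS_zero (y : Fin N → Y) (σ : Fin N → Bool) : PS y 0 σ = 0 := by simp [PS]

lemma PS_N (y : Fin N → Y) (σ : Fin N → Bool) : PS y N σ = SS y σ := by
  unfold PS SS
  rw [Finset.filter_true_of_mem (fun i _ => i.isLt)]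

lemma norm_PS_succ_le (y : Fin N → Y) (j : ℕ) (σ : Fin N → Bool) {A : ℝ}
    (hy : ∀ i, ‖y i‖ ≤ A) (hA : 0 ≤ A) :
    ‖PS y (j+1) σ‖ ≤ ‖PS y j σ‖ + A := by
  classical
  have hsplit : (Finset.univ.filter fun i : Fin N => (i:ℕ) < j + 1)
      = (Finset.univ.filter fun i : Fin N => (i:ℕ) < j)
        ∪ (Finset.univ.filter fun i : Fin N => (i:ℕ) = j) := by
    ext i
    simp only [Finset.mem_filter, Finset.mem_union, Finset.mem_univ, true_and]
    omega
  have hdisj : Disjoint (Finset.univ.filter fun i : Fin N => (i:ℕ) < j)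
      (Finset.univ.filter fun i : Fin N => (i:ℕ) = j) := by
    rw [Finset.disjoint_left]
    intro a ha hb
    simp only [Finset.mem_filter] at ha hb
    omega
  unfold PS
  rw [hsplit, Finset.sum_union hdisj]
  refine (norm_add_le _ _).trans (add_le_add le_rfl ?_)
  have hcard : (Finset.univ.filter fun i : Fin N => (i:ℕ) = j).card ≤ 1 := by
    apply Finset.card_le_one.mpr
    intro a ha b hb
    simp only [Finset.mem_filter] at ha hb
    exact Fin.ext (by omega)
  calc ‖∑ i ∈ Finset.univ.filter fun i : Fin N => (i:ℕ) = j, sg (σ i) • y i‖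
      ≤ ∑ i ∈ Finset.univ.filter (fun i : Fin N => (i:ℕ) = j), ‖sg (σ i) • y i‖ :=
        norm_sum_le _ _
    _ ≤ ∑ _i ∈ Finset.univ.filter (fun i : Fin N => (i:ℕ) = j), A :=
        Finset.sum_le_sum fun i _ => by rw [norm_sg_smul]; exact hy i
    _ = (Finset.univ.filter fun i : Fin N => (i:ℕ) = j).card • A := by
        rw [Finset.sum_const]
    _ ≤ 1 * A := by
        rw [nsmul_eq_mul]
        exact mul_le_mul_of_nonneg_right (by exact_mod_cast hcard) hA
    _ = A := one_mul A

/-- flip the coordinates satisfying `c` -/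
def flipC {N : ℕ} (c : Fin N → Prop) [DecidablePred c] : (Fin N → Bool) ≃ (Fin N → Bool) :=
  Function.Involutive.toPerm (fun σ i => if c i then !(σ i) else σ i)
    (by intro σ; funext i; by_cases h : c i <;> simp [h])

lemma flipC_apply {N : ℕ} (c : Fin N → Prop) [DecidablePred c] (σ : Fin N → Bool) (i : Fin N) :
    flipC c σ i = if c i then !(σ i) else σ i := rfl

lemma sum_flipC_of_not {c : Fin N → Prop} [DecidablePred c] (y : Fin N → Y)
    (s : Finset (Fin N)) (h : ∀ i ∈ s, ¬ c i) (σ : Fin N → Bool) :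
    ∑ i ∈ s, sg (flipC c σ i) • y i = ∑ i ∈ s, sg (σ i) • y i := by
  refine Finset.sum_congr rfl fun i hi => ?_
  rw [flipC_apply, if_neg (h i hi)]

lemma sum_flipC_of_mem {c : Fin N → Prop} [DecidablePred c] (y : Fin N → Y)
    (s : Finset (Fin N)) (h : ∀ i ∈ s, c i) (σ : Fin N → Bool) :
    ∑ i ∈ s, sg (flipC c σ i) • y i = - ∑ i ∈ s, sg (σ i) • y i := by
  rw [← Finset.sum_neg_distrib]
  refine Finset.sum_congr rfl fun i hi => ?_
  rw [flipC_apply, if_pos (h i hi), sg_not, neg_smul]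

def flipGE (N j : ℕ) : (Fin N → Bool) ≃ (Fin N → Bool) := flipC (fun i : Fin N => j ≤ (i:ℕ))

def flipLT (N j : ℕ) : (Fin N → Bool) ≃ (Fin N → Bool) := flipC (fun i : Fin N => (i:ℕ) < j)

lemma PS_flipGE (y : Fin N → Y) {m j : ℕ} (h : m ≤ j) (σ : Fin N → Bool) :
    PS y m (flipGE N j σ) = PS y m σ := by
  unfold PS flipGE
  apply sum_flipC_of_not
  intro i hi
  simp only [Finset.mem_filter] at hi
  omega

lemma TL_flipGE (y : Fin N → Y) (j : ℕ) (σ : Fin N → Bool) :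
    TL y j (flipGE N j σ) = - TL y j σ := by
  unfold TL flipGE
  apply sum_flipC_of_mem
  intro i hi
  simp only [Finset.mem_filter] at hi
  omega

lemma SS_flipGE (y : Fin N → Y) (j : ℕ) (σ : Fin N → Bool) :
    SS y (flipGE N j σ) + SS y σ = PS y j σ + PS y j σ := by
  rw [← PS_add_TL y j (flipGE N j σ), ← PS_add_TL y j σ, PS_flipGE y le_rfl, TL_flipGE]
  abel

lemma PS_flipLT (y : Fin N → Y) (j : ℕ) (σ : Fin N → Bool) :
    PS y j (flipLT N j σ) = - PS y j σ := by
  unfold PS flipLT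
  apply sum_flipC_of_mem
  intro i hi
  simp only [Finset.mem_filter] at hi
  omega

lemma TL_flipLT (y : Fin N → Y) (j : ℕ) (σ : Fin N → Bool) :
    TL y j (flipLT N j σ) = TL y j σ := by
  unfold TL flipLT
  apply sum_flipC_of_not
  intro i hi
  simp only [Finset.mem_filter] at hi
  omega

lemma SS_flipLT (y : Fin N → Y) (j : ℕ) (σ : Fin N → Bool) :
    SS y (flipLT N j σ) + SS y σ = TL y j σ + TL y j σ := by
  rw [← PS_add_TL y j (flipLT N j σ), ← PS_add_TL y j σ, PS_flipLT, TL_flipLT]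
  abel

/-- stopping event: `j` is the first time the partial sum exceeds `t` -/
def stpE (y : Fin N → Y) (t : ℝ) (j : ℕ) (σ : Fin N → Bool) : Prop :=
  t < ‖PS y j σ‖ ∧ ∀ m < j, ‖PS y m σ‖ ≤ t

lemma stpE_flipGE (y : Fin N → Y) (t : ℝ) (j : ℕ) (σ : Fin N → Bool) :
    stpE y t j (flipGE N j σ) ↔ stpE y t j σ := by
  unfold stpE
  rw [PS_flipGE y le_rfl]
  constructor
  · rintro ⟨h1, h2⟩
    exact ⟨h1, fun m hm => by have := h2 m hm; rwa [PS_flipGE y hm.le] at this⟩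
  · rintro ⟨h1, h2⟩
    exact ⟨h1, fun m hm => by rw [PS_flipGE y hm.le]; exact h2 m hm⟩

lemma levy_sum (y : Fin N → Y) (t : ℝ) :
    ∑ j ∈ Finset.range (N+1), (evt (stpE y t j)).card
      ≤ 2 * (evt fun σ => t < ‖SS y σ‖).card := by
  classical
  have h1 : ∀ j, (evt (stpE y t j)).card
      ≤ 2 * (evt fun σ => stpE y t j σ ∧ t < ‖SS y σ‖).card := by
    intro j
    have h2 : (evt (stpE y t j)).card
        ≤ (evt fun σ => stpE y t j σ ∧ t < ‖SS y σ‖).card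
          + (evt fun σ => stpE y t j (flipGE N j σ) ∧ t < ‖SS y (flipGE N j σ)‖).card := by
      apply evt_card_le_add
      intro σ hσ
      have key : t + t < ‖SS y σ‖ + ‖SS y (flipGE N j σ)‖ := by
        have h3 : ‖PS y j σ + PS y j σ‖ ≤ ‖SS y (flipGE N j σ)‖ + ‖SS y σ‖ := by
          rw [← SS_flipGE y j σ]; exact norm_add_le _ _
        have h4 : ‖PS y j σ‖ + ‖PS y j σ‖ ≤ ‖SS y (flipGE N j σ)‖ + ‖SS y σ‖ := by
          rw [← two_smul ℝ (PS y j σ), norm_smul, Real.norm_ofNat] at h3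
          linarith
        have ht' := hσ.1
        linarith
      by_cases hc : t < ‖SS y σ‖
      · exact Or.inl ⟨hσ, hc⟩
      · right
        refine ⟨(stpE_flipGE y t j σ).mpr hσ, ?_⟩
        push_neg at hc
        linarith
    rw [evt_card_equiv (flipGE N j) (fun σ => stpE y t j σ ∧ t < ‖SS y σ‖)] at h2
    omega
  have hdisj : ∀ j1 ∈ Finset.range (N+1), ∀ j2 ∈ Finset.range (N+1), j1 ≠ j2 →
      Disjoint (evt fun σ => stpE y t j1 σ ∧ t < ‖SS y σ‖)
        (evt fun σ => stpE y t j2 σ ∧ t < ‖SS y σ‖) := by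
    intro j1 _ j2 _ hne
    rw [Finset.disjoint_left]
    intro σ h1' h2'
    have ha := (mem_evt.mp h1').1
    have hb := (mem_evt.mp h2').1
    rcases Nat.lt_or_ge j1 j2 with h | h
    · exact absurd ha.1 (not_lt.mpr (hb.2 j1 h))
    · have : j2 < j1 := by omega
      exact absurd hb.1 (not_lt.mpr (ha.2 j2 this))
  calc ∑ j ∈ Finset.range (N+1), (evt (stpE y t j)).card
      ≤ ∑ j ∈ Finset.range (N+1), 2 * (evt fun σ => stpE y t j σ ∧ t < ‖SS y σ‖).card :=
        Finset.sum_le_sum fun j _ => h1 j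
    _ = 2 * ∑ j ∈ Finset.range (N+1), (evt fun σ => stpE y t j σ ∧ t < ‖SS y σ‖).card := by
        rw [Finset.mul_sum]
    _ = 2 * ((Finset.range (N+1)).biUnion
          (fun j => evt fun σ => stpE y t j σ ∧ t < ‖SS y σ‖)).card := by
        rw [Finset.card_biUnion hdisj]
    _ ≤ 2 * (evt fun σ => t < ‖SS y σ‖).card := by
        apply Nat.mul_le_mul_left
        apply Finset.card_le_card
        intro σ hσ
        rw [Finset.mem_biUnion] at hσ
        obtain ⟨j, _, hj⟩ := hσ
        exact mem_evt.mpr (mem_evt.mp hj).2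

lemma TL_tail_card (y : Fin N → Y) (j : ℕ) (t : ℝ) :
    (evt fun σ => t < ‖TL y j σ‖).card ≤ 2 * (evt fun σ => t < ‖SS y σ‖).card := by
  classical
  have h2 : (evt fun σ => t < ‖TL y j σ‖).card
      ≤ (evt fun σ => t < ‖SS y σ‖).card + (evt fun σ => t < ‖SS y (flipLT N j σ)‖).card := by
    apply evt_card_le_add
    intro σ hσ
    have h3 : ‖TL y j σ + TL y j σ‖ ≤ ‖SS y (flipLT N j σ)‖ + ‖SS y σ‖ := by
      rw [← SS_flipLT y j σ]; exact norm_add_le _ _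
    rw [← two_smul ℝ (TL y j σ), norm_smul] at h3
    simp only [Real.norm_ofNat] at h3
    by_cases hc : t < ‖SS y σ‖
    · exact Or.inl hc
    · push_neg at hc
      exact Or.inr (by nlinarith)
  rw [evt_card_equiv (flipLT N j) (fun σ => t < ‖SS y σ‖)] at h2
  omega

lemma card_evt_proddep (j : ℕ) (A B : (Fin N → Bool) → Prop)
    (hA : ∀ σ σ' : Fin N → Bool, (∀ i : Fin N, (i:ℕ) < j → σ i = σ' i) → A σ → A σ')
    (hB : ∀ σ σ' : Fin N → Bool, (∀ i : Fin N, ¬ (i:ℕ) < j → σ i = σ' i) → B σ → B σ') :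
    (evt fun σ => A σ ∧ B σ).card * 2^N = (evt A).card * (evt B).card := by
  classical
  set P : Fin N → Prop := fun i => (i:ℕ) < j with hP
  set e := (Equiv.piEquivPiSubtypeProd P fun _ => Bool) with he
  set A' : ({i // P i} → Bool) → Prop := fun a => A (e.symm (a, fun _ => false)) with hA'
  set B' : ({i // ¬ P i} → Bool) → Prop := fun b => B (e.symm (fun _ => false, b)) with hB'
  have hAe : ∀ ab : ({i // P i} → Bool) × ({i // ¬ P i} → Bool),
      A (e.symm ab) ↔ A' ab.1 := by
    intro ab
    have agree : ∀ (b : {i // ¬ P i} → Bool) (i : Fin N), P i →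
        e.symm ab i = e.symm (ab.1, b) i := by
      intro b i hi
      simp only [he, Equiv.piEquivPiSubtypeProd_symm_apply, dif_pos hi]
    constructor
    · intro h; exact hA _ _ (agree _) h
    · intro h; exact hA _ _ (fun i hi => (agree _ i hi).symm) h
  have hBe : ∀ ab : ({i // P i} → Bool) × ({i // ¬ P i} → Bool),
      B (e.symm ab) ↔ B' ab.2 := by
    intro ab
    have agree : ∀ (a : {i // P i} → Bool) (i : Fin N), ¬ P i →
        e.symm ab i = e.symm (a, ab.2) i := by
      intro a i hi
      simp only [he, Equiv.piEquivPiSubtypeProd_symm_apply, dif_neg hi]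
    constructor
    · intro h; exact hB _ _ (agree _) h
    · intro h; exact hB _ _ (fun i hi => (agree _ i hi).symm) h
  have hprodAB : (evt fun σ => A σ ∧ B σ).card = (evt A' ×ˢ evt B').card := by
    rw [← evt_card_equiv e.symm (fun σ => A σ ∧ B σ)]
    congr 1
    rw [evt_congr (fun ab => and_congr (hAe ab) (hBe ab))]
    ext ab
    rw [mem_evt, Finset.mem_product, mem_evt, mem_evt]
  have hprodA : (evt A).card = (evt A' ×ˢ (Finset.univ : Finset ({i // ¬ P i} → Bool))).card := by
    rw [← evt_card_equiv e.symm A]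
    congr 1
    rw [evt_congr (fun ab => hAe ab)]
    ext ab
    rw [mem_evt, Finset.mem_product, mem_evt]
    simp
  have hprodB : (evt B).card = ((Finset.univ : Finset ({i // P i} → Bool)) ×ˢ evt B').card := by
    rw [← evt_card_equiv e.symm B]
    congr 1
    rw [evt_congr (fun ab => hBe ab)]
    ext ab
    rw [mem_evt, Finset.mem_product, mem_evt]
    simp
  have hcard2 : (2:ℕ)^N = Fintype.card ({i // P i} → Bool) * Fintype.card ({i // ¬ P i} → Bool) := by
    have h1 : Fintype.card (Fin N → Bool) = 2^N := by
      rw [Fintype.card_fun]; simp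
    rw [← h1, Fintype.card_congr e, Fintype.card_prod]
  rw [hprodAB, hprodA, hprodB, Finset.card_product, Finset.card_product, Finset.card_product,
    hcard2, Finset.card_univ, Finset.card_univ]
  ring

lemma HJ (y : Fin N → Y) {A t : ℝ} (ht : 0 ≤ t) (hA : 0 ≤ A) (hy : ∀ i, ‖y i‖ ≤ A) :
    (evt fun σ => 2*t + A < ‖SS y σ‖).card * 2^N
      ≤ 4 * (evt fun σ => t < ‖SS y σ‖).card^2 := by
  classical
  have hincl : ∀ σ, (2*t + A < ‖SS y σ‖) →
      ∃ j, j ≤ N ∧ stpE y t j σ ∧ t < ‖TL y j σ‖ := by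
    intro σ hσ
    have hQN : t < ‖PS y N σ‖ := by
      rw [PS_N]; linarith
    have hex : ∃ m, t < ‖PS y m σ‖ := ⟨N, hQN⟩
    have hspec : t < ‖PS y (Nat.find hex) σ‖ := Nat.find_spec hex
    have hmin : ∀ m < Nat.find hex, ‖PS y m σ‖ ≤ t := fun m hm => not_lt.mp (Nat.find_min hex hm)
    have hjN : Nat.find hex ≤ N := Nat.find_min' hex hQN
    have hj0 : Nat.find hex ≠ 0 := by
      intro h0
      rw [h0, PS_zero, norm_zero] at hspec
      linarith
    obtain ⟨j', hj'⟩ := Nat.exists_eq_succ_of_ne_zero hj0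
    rw [hj'] at hspec hmin hjN
    have hPSle : ‖PS y (j'+1) σ‖ ≤ t + A := by
      have := norm_PS_succ_le y j' σ hy hA
      have h2 := hmin j' (Nat.lt_succ_self j')
      linarith
    refine ⟨j'+1, hjN, ⟨hspec, hmin⟩, ?_⟩
    have h5 := norm_add_le (PS y (j'+1) σ) (TL y (j'+1) σ)
    rw [PS_add_TL] at h5
    linarith
  set c := (evt fun σ => t < ‖SS y σ‖).card with hc
  have step1 : (evt fun σ => 2*t + A < ‖SS y σ‖).card
      ≤ ∑ j ∈ Finset.range (N+1), (evt fun σ => stpE y t j σ ∧ t < ‖TL y j σ‖).card := by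
    calc (evt fun σ => 2*t + A < ‖SS y σ‖).card
        ≤ ((Finset.range (N+1)).biUnion
            (fun j => evt fun σ => stpE y t j σ ∧ t < ‖TL y j σ‖)).card := by
          apply Finset.card_le_card
          intro σ hσ
          obtain ⟨j, hjN, h1, h2⟩ := hincl σ ((mem_evt (E := fun σ => 2*t + A < ‖SS y σ‖)).mp hσ)
          rw [Finset.mem_biUnion]
          exact ⟨j, Finset.mem_range.mpr (by omega), mem_evt.mpr ⟨h1, h2⟩⟩
      _ ≤ _ := Finset.card_biUnion_le
  have step2 : ∀ j, (evt fun σ => stpE y t j σ ∧ t < ‖TL y j σ‖).card * 2^N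
      = (evt (stpE y t j)).card * (evt fun σ => t < ‖TL y j σ‖).card := by
    intro j
    apply card_evt_proddep j
    · intro σ σ' hag ⟨h1, h2⟩
      have hPS : ∀ m ≤ j, PS y m σ' = PS y m σ := by
        intro m hm
        refine Finset.sum_congr rfl fun i hi => ?_
        simp only [Finset.mem_filter] at hi
        rw [hag i (by omega)]
      refine ⟨by rw [hPS j le_rfl]; exact h1, fun m hm => by rw [hPS m hm.le]; exact h2 m hm⟩
    · intro σ σ' hag h1
      have hTL : TL y j σ' = TL y j σ := by
        refine Finset.sum_congr rfl fun i hi => ?_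
        simp only [Finset.mem_filter] at hi
        rw [hag i hi.2]
      rw [hTL]; exact h1
  calc (evt fun σ => 2*t + A < ‖SS y σ‖).card * 2^N
      ≤ (∑ j ∈ Finset.range (N+1), (evt fun σ => stpE y t j σ ∧ t < ‖TL y j σ‖).card) * 2^N :=
        Nat.mul_le_mul_right _ step1
    _ = ∑ j ∈ Finset.range (N+1),
          (evt (stpE y t j)).card * (evt fun σ => t < ‖TL y j σ‖).card := by
        rw [Finset.sum_mul]
        exact Finset.sum_congr rfl fun j _ => step2 j
    _ ≤ ∑ j ∈ Finset.range (N+1), (evt (stpE y t j)).card * (2 * c) :=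
        Finset.sum_le_sum fun j _ => Nat.mul_le_mul_left _ (TL_tail_card y j t)
    _ = (∑ j ∈ Finset.range (N+1), (evt (stpE y t j)).card) * (2 * c) := by
        rw [Finset.sum_mul]
    _ ≤ (2 * c) * (2 * c) := Nat.mul_le_mul_right _ (levy_sum y t)
    _ = 4 * c^2 := by ring

lemma coeff_sum_eq (y : Fin N → Y) (i : Fin N) :
    ∑ σ : Fin N → Bool, sg (σ i) • SS y σ = (2^N : ℝ) • y i := by
  classical
  have h1 : ∀ σ : Fin N → Bool, sg (σ i) • SS y σ = ∑ j, (sg (σ i) * sg (σ j)) • y j := by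
    intro σ
    rw [SS, Finset.smul_sum]
    exact Finset.sum_congr rfl fun j _ => smul_smul _ _ _
  rw [Finset.sum_congr rfl fun σ _ => h1 σ, Finset.sum_comm]
  have h2 : ∀ j : Fin N, ∑ σ : Fin N → Bool, (sg (σ i) * sg (σ j)) • y j
      = (∑ σ : Fin N → Bool, sg (σ i) * sg (σ j)) • y j := by
    intro j
    rw [Finset.sum_smul]
  rw [Finset.sum_congr rfl fun j _ => h2 j]
  have hcard : Fintype.card (Fin N → Bool) = 2^N := by
    rw [Fintype.card_fun]
    simp
  have horth : ∀ j : Fin N, j ≠ i → (∑ σ : Fin N → Bool, sg (σ i) * sg (σ j)) = 0 := by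
    intro j hj
    have hflip := Equiv.sum_comp (flipC (fun k : Fin N => k = j))
      (fun σ : Fin N → Bool => sg (σ i) * sg (σ j))
    have hneg : ∀ σ : Fin N → Bool,
        sg (flipC (fun k : Fin N => k = j) σ i) * sg (flipC (fun k : Fin N => k = j) σ j)
          = - (sg (σ i) * sg (σ j)) := by
      intro σ
      rw [flipC_apply, flipC_apply, if_neg (by exact fun h => hj (by rw [← h]) ), if_pos rfl,
        sg_not]
      ring
    rw [Finset.sum_congr rfl fun σ _ => hneg σ, Finset.sum_neg_distrib] at hflip
    linarith
  have hii : (∑ σ : Fin N → Bool, sg (σ i) * sg (σ i)) = 2^N := by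
    rw [Finset.sum_congr rfl fun σ _ => sg_mul_self (σ i), Finset.sum_const, Finset.card_univ,
      hcard]
    simp
  rw [Fintype.sum_eq_single i (fun j hj => by rw [horth j hj, zero_smul]), hii]

lemma norm_coeff_le (y : Fin N → Y) (i : Fin N) :
    ‖y i‖ * 2^N ≤ ∑ σ : Fin N → Bool, ‖SS y σ‖ := by
  have h1 : ‖(2^N : ℝ) • y i‖ = 2^N * ‖y i‖ := by
    rw [norm_smul, Real.norm_eq_abs, abs_of_pos (by positivity)]
  calc ‖y i‖ * 2^N = ‖(2^N : ℝ) • y i‖ := by rw [h1]; ring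
    _ = ‖∑ σ : Fin N → Bool, sg (σ i) • SS y σ‖ := by rw [coeff_sum_eq]
    _ ≤ ∑ σ : Fin N → Bool, ‖sg (σ i) • SS y σ‖ := norm_sum_le _ _
    _ = ∑ σ : Fin N → Bool, ‖SS y σ‖ :=
        Finset.sum_congr rfl fun σ _ => norm_sg_smul _ _

def kconst (p : ℝ) : ℝ := 16 * 3 ^ (⌈p⌉₊)

lemma kconst_pos (p : ℝ) : 0 < kconst p := by unfold kconst; positivity

lemma rpow_pow_comm (k : ℕ) (p : ℝ) : ((3:ℝ)^k : ℝ) ^ p = ((3:ℝ) ^ p) ^ k := by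
  rw [← Real.rpow_natCast 3 k, ← Real.rpow_mul (by norm_num : (0:ℝ) ≤ 3), mul_comm,
    Real.rpow_mul (by norm_num : (0:ℝ) ≤ 3), Real.rpow_natCast]

set_option maxHeartbeats 1000000 in
lemma kahane_fin (p : ℝ) (hp : 1 ≤ p) (y : Fin N → Y) :
    (2^N : ℝ)⁻¹ * ∑ σ : Fin N → Bool, ‖SS y σ‖ ^ p
      ≤ (kconst p * ((2^N : ℝ)⁻¹ * ∑ σ : Fin N → Bool, ‖SS y σ‖)) ^ p := by
  classical
  have hp0 : (0:ℝ) < p := lt_of_lt_of_le one_pos hp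
  have h2N : (0:ℝ) < 2^N := by positivity
  set A := (2^N : ℝ)⁻¹ * ∑ σ : Fin N → Bool, ‖SS y σ‖ with hAdef
  have hA0 : 0 ≤ A := by
    apply mul_nonneg (by positivity)
    exact Finset.sum_nonneg fun σ _ => norm_nonneg _
  rcases eq_or_lt_of_le hA0 with hA | hA
  · -- degenerate case A = 0
    have h2 : ∑ σ : Fin N → Bool, ‖SS y σ‖ = 0 := by
      rcases mul_eq_zero.mp hA.symm with h | h
      · exact absurd h (by positivity)
      · exact h
    have hz := (Finset.sum_eq_zero_iff_of_nonneg fun σ _ => norm_nonneg (SS y σ)).mp h2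
    rw [← hA, mul_zero, Real.zero_rpow hp0.ne']
    have h3 : ∑ σ : Fin N → Bool, ‖SS y σ‖ ^ p = 0 :=
      Finset.sum_eq_zero fun σ hσ => by rw [hz σ hσ, Real.zero_rpow hp0.ne']
    rw [h3, mul_zero]
  · -- main case A > 0
    have hsumA : ∑ σ : Fin N → Bool, ‖SS y σ‖ = 2^N * A := by
      rw [hAdef]; field_simp
    have hy : ∀ i, ‖y i‖ ≤ A := by
      intro i
      have h := norm_coeff_le y i
      rw [hsumA] at h
      nlinarith
    set m := ⌈p⌉₊ with hm
    set β : ℝ := 8 * 3^m with hβdef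
    have h3m1 : (1:ℝ) ≤ 3^m := one_le_pow₀ (by norm_num)
    have hβ8 : (8:ℝ) ≤ β := by nlinarith
    have hβpos : (0:ℝ) < β := by linarith
    have h3pm : (3:ℝ)^p ≤ 3^m := by
      rw [← Real.rpow_natCast 3 m]
      exact Real.rpow_le_rpow_of_exponent_le (by norm_num) (Nat.le_ceil p)
    have h3p_pos : (0:ℝ) < (3:ℝ)^p := Real.rpow_pos_of_pos (by norm_num) p
    -- Markov at every threshold
    have hc0 : ∀ j : ℕ, ((evt fun σ => β * 3^j * A < ‖SS y σ‖).card : ℝ) ≤ 2^N / β := by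
      intro j
      have hmark := evt_markov (fun σ : Fin N → Bool => ‖SS y σ‖)
        (fun σ => norm_nonneg _) (β * 3^j * A)
      rw [hsumA] at hmark
      have h3j : (1:ℝ) ≤ 3^j := one_le_pow₀ (by norm_num)
      have hcnn : (0:ℝ) ≤ ((evt fun σ => β * 3^j * A < ‖SS y σ‖).card : ℝ) := Nat.cast_nonneg _
      rw [le_div_iff₀ hβpos]
      have hkey : ((evt fun σ => β * 3^j * A < ‖SS y σ‖).card : ℝ) * β * A ≤ 2^N * A := by
        nlinarith [mul_nonneg (mul_nonneg (mul_nonneg hcnn hβpos.le) hA.le)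
          (sub_nonneg.mpr h3j)]
      exact le_of_mul_le_mul_right hkey hA
    -- geometric tail bound
    have hcard : ∀ j : ℕ, ((evt fun σ => β * 3^j * A < ‖SS y σ‖).card : ℝ)
        ≤ (4/β)^j * (2^N/β) := by
      intro j
      induction j with
      | zero => simpa using hc0 0
      | succ j ih =>
        have h3j : (1:ℝ) ≤ 3^j := one_le_pow₀ (by norm_num)
        have hb3j : (1:ℝ) ≤ β * 3^j := by nlinarith
        have hthr : 2*(β*3^j*A) + A ≤ β*3^(j+1)*A := by
          have hX : A ≤ β*3^j*A := by nlinarith [mul_nonneg hA0 (sub_nonneg.mpr hb3j)]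
          calc 2*(β*3^j*A) + A ≤ 3*(β*3^j*A) := by linarith
            _ = β*3^(j+1)*A := by rw [pow_succ]; ring
        have hstep : ((evt fun σ => β * 3^(j+1) * A < ‖SS y σ‖).card : ℝ)
            ≤ ((evt fun σ => 2*(β*3^j*A) + A < ‖SS y σ‖).card : ℝ) := by
          have := evt_card_le (E := fun σ => β * 3^(j+1) * A < ‖SS y σ‖)
            (F := fun σ => 2*(β*3^j*A) + A < ‖SS y σ‖)
            (fun σ h => lt_of_le_of_lt hthr h)
          exact_mod_cast this
        have hHJ := HJ y (t := β*3^j*A)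
          (by positivity) hA0 hy
        have hHJ' : ((evt fun σ => 2*(β*3^j*A) + A < ‖SS y σ‖).card : ℝ) * 2^N
            ≤ 4 * ((evt fun σ => β*3^j*A < ‖SS y σ‖).card : ℝ)^2 := by
          exact_mod_cast hHJ
        set cj := ((evt fun σ => β*3^j*A < ‖SS y σ‖).card : ℝ) with hcj
        have hcjnn : 0 ≤ cj := Nat.cast_nonneg _
        have hcj0 : cj ≤ 2^N / β := hc0 j
        have h1 : ((evt fun σ => 2*(β*3^j*A) + A < ‖SS y σ‖).card : ℝ) ≤ (4/β) * cj := by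
          rw [div_mul_eq_mul_div, le_div_iff₀ hβpos]
          have hcjβ : cj * β ≤ 2^N := by rw [← le_div_iff₀ hβpos]; exact hcj0
          nlinarith [mul_le_mul_of_nonneg_right hHJ' hβpos.le,
            mul_le_mul_of_nonneg_left hcjβ (mul_nonneg (by norm_num : (0:ℝ) ≤ 4) hcjnn), h2N]
        calc ((evt fun σ => β * 3^(j+1) * A < ‖SS y σ‖).card : ℝ)
            ≤ (4/β) * cj := le_trans hstep h1
          _ ≤ (4/β) * ((4/β)^j * (2^N/β)) := by
              apply mul_le_mul_of_nonneg_left ih (by positivity)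
          _ = (4/β)^(j+1) * (2^N/β) := by ring
    -- pointwise bound
    have hpt : ∀ σ : Fin N → Bool, ‖SS y σ‖^p ≤ (β*A)^p
        + ∑ j ∈ Finset.range (N+1), (β*3^(j+1)*A)^p
            * Set.indicator {σ' : Fin N → Bool | β*3^j*A < ‖SS y σ'‖} (fun _ => (1:ℝ)) σ := by
      intro σ
      have hindnn : ∀ j (σ' : Fin N → Bool),
          (0:ℝ) ≤ Set.indicator {σ' : Fin N → Bool | β*3^j*A < ‖SS y σ'‖} (fun _ => (1:ℝ)) σ' :=
        fun j σ' => Set.indicator_nonneg (fun _ _ => by norm_num) _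
      have htermnn : ∀ j ∈ Finset.range (N+1), (0:ℝ) ≤ (β*3^(j+1)*A)^p
          * Set.indicator {σ' : Fin N → Bool | β*3^j*A < ‖SS y σ'‖} (fun _ => (1:ℝ)) σ := by
        intro j _
        exact mul_nonneg (Real.rpow_nonneg (by positivity) p) (hindnn j σ)
      rcases le_or_gt ‖SS y σ‖ (β*A) with hle | hlt
      · have h1 : ‖SS y σ‖^p ≤ (β*A)^p := Real.rpow_le_rpow (norm_nonneg _) hle hp0.le
        have h2 : (0:ℝ) ≤ ∑ j ∈ Finset.range (N+1), (β*3^(j+1)*A)^p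
            * Set.indicator {σ' : Fin N → Bool | β*3^j*A < ‖SS y σ'‖} (fun _ => (1:ℝ)) σ :=
          Finset.sum_nonneg htermnn
        linarith
      · have hSbd : ‖SS y σ‖ ≤ β * 3^N * A := by
          have h1 : ‖SS y σ‖ ≤ ∑ i : Fin N, ‖y i‖ := by
            rw [SS]
            refine (norm_sum_le _ _).trans (le_of_eq ?_)
            exact Finset.sum_congr rfl fun i _ => norm_sg_smul _ _
          have h2 : ∑ i : Fin N, ‖y i‖ ≤ N * A := by
            calc ∑ i : Fin N, ‖y i‖ ≤ ∑ _i : Fin N, A := Finset.sum_le_sum fun i _ => hy i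
              _ = N * A := by rw [Finset.sum_const, Finset.card_univ, Fintype.card_fin,
                    nsmul_eq_mul]
          have h3 : (N:ℝ) ≤ 3^N := by
            have := Nat.lt_pow_self (by norm_num : 1 < 3) (n := N)
            exact_mod_cast this.le
          have h3N : (0:ℝ) ≤ (3:ℝ)^N := by positivity
          nlinarith [mul_le_mul_of_nonneg_right h3 hA.le,
            mul_nonneg (mul_nonneg (by linarith : (0:ℝ) ≤ β - 1) h3N) hA.le]
        have hP0 : β * 3^0 * A < ‖SS y σ‖ := by simpa using hlt
        have hJmax : ∀ k, β * 3^k * A < ‖SS y σ‖ → k < N := by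
          intro k hk
          by_contra hknot
          push_neg at hknot
          have h3kN : (3:ℝ)^N ≤ 3^k := pow_le_pow_right₀ (by norm_num) hknot
          nlinarith [mul_le_mul_of_nonneg_right
            (mul_le_mul_of_nonneg_left h3kN hβpos.le) hA.le]
        set P : ℕ → Prop := fun j => β * 3^j * A < ‖SS y σ‖ with hPdef
        have hJspec : P (Nat.findGreatest P N) :=
          Nat.findGreatest_spec (Nat.zero_le N) hP0
        have hJlt : Nat.findGreatest P N < N := hJmax _ hJspec
        have hnot : ¬ P (Nat.findGreatest P N + 1) :=
          Nat.findGreatest_is_greatest (Nat.lt_succ_self _) (by omega)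
        have hupper : ‖SS y σ‖ ≤ β * 3^(Nat.findGreatest P N + 1) * A := not_lt.mp hnot
        set J := Nat.findGreatest P N with hJdef
        have hJrange : J ∈ Finset.range (N+1) := Finset.mem_range.mpr (by omega)
        have hind1 : Set.indicator {σ' : Fin N → Bool | β*3^J*A < ‖SS y σ'‖}
            (fun _ => (1:ℝ)) σ = 1 := Set.indicator_of_mem
              (show σ ∈ {σ' : Fin N → Bool | β*3^J*A < ‖SS y σ'‖} from hJspec) _
        have hsingle : (β*3^(J+1)*A)^p
              * Set.indicator {σ' : Fin N → Bool | β*3^J*A < ‖SS y σ'‖} (fun _ => (1:ℝ)) σ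
            ≤ ∑ j ∈ Finset.range (N+1), (β*3^(j+1)*A)^p
              * Set.indicator {σ' : Fin N → Bool | β*3^j*A < ‖SS y σ'‖} (fun _ => (1:ℝ)) σ :=
          Finset.single_le_sum htermnn hJrange
        have h1 : ‖SS y σ‖^p ≤ (β*3^(J+1)*A)^p :=
          Real.rpow_le_rpow (norm_nonneg _) hupper hp0.le
        have h2 : (0:ℝ) ≤ (β*A)^p := Real.rpow_nonneg (by positivity) p
        rw [hind1, mul_one] at hsingle
        linarith
    -- sum the pointwise bound
    have hcardΩ : (Finset.univ : Finset (Fin N → Bool)).card = 2^N := by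
      rw [Finset.card_univ, Fintype.card_fun]
      simp
    have hsum1 : ∑ σ : Fin N → Bool, ‖SS y σ‖^p ≤ 2^N * (β*A)^p
        + ∑ j ∈ Finset.range (N+1), (β*3^(j+1)*A)^p
            * ((evt fun σ => β*3^j*A < ‖SS y σ‖).card : ℝ) := by
      calc ∑ σ : Fin N → Bool, ‖SS y σ‖^p
          ≤ ∑ σ : Fin N → Bool, ((β*A)^p
            + ∑ j ∈ Finset.range (N+1), (β*3^(j+1)*A)^p
              * Set.indicator {σ' : Fin N → Bool | β*3^j*A < ‖SS y σ'‖} (fun _ => (1:ℝ)) σ) :=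
            Finset.sum_le_sum fun σ _ => hpt σ
        _ = 2^N * (β*A)^p + ∑ σ : Fin N → Bool, ∑ j ∈ Finset.range (N+1), (β*3^(j+1)*A)^p
              * Set.indicator {σ' : Fin N → Bool | β*3^j*A < ‖SS y σ'‖} (fun _ => (1:ℝ)) σ := by
            rw [Finset.sum_add_distrib, Finset.sum_const, hcardΩ, nsmul_eq_mul]
            norm_cast
        _ = 2^N * (β*A)^p + ∑ j ∈ Finset.range (N+1), (β*3^(j+1)*A)^p
              * ((evt fun σ => β*3^j*A < ‖SS y σ‖).card : ℝ) := by
            congr 1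
            rw [Finset.sum_comm]
            refine Finset.sum_congr rfl fun j _ => ?_
            rw [← Finset.mul_sum, evt_sum_indicator (fun σ => β*3^j*A < ‖SS y σ‖)]
    -- bound the j-sum
    have hgeom : ∑ j ∈ Finset.range (N+1), ((3:ℝ)^p * (4/β))^j ≤ 2 := by
      have hr0 : (0:ℝ) ≤ (3:ℝ)^p * (4/β) := by positivity
      have hr : (3:ℝ)^p * (4/β) ≤ 1/2 := by
        rw [← mul_div_assoc, div_le_div_iff₀ hβpos (by norm_num : (0:ℝ) < 2), hβdef]
        nlinarith
      calc ∑ j ∈ Finset.range (N+1), ((3:ℝ)^p * (4/β))^j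
          ≤ ∑ j ∈ Finset.range (N+1), (1/2:ℝ)^j :=
            Finset.sum_le_sum fun j _ => pow_le_pow_left₀ hr0 hr j
        _ ≤ 2 := by
            have h := geom_sum_eq (by norm_num : (1/2:ℝ) ≠ 1) (N+1)
            rw [h]
            have hpw : (0:ℝ) ≤ (1/2:ℝ)^(N+1) := by positivity
            have hpw1 : ((1/2:ℝ))^(N+1) ≤ 1 := pow_le_one₀ (by norm_num) (by norm_num)
            rw [div_le_iff_of_neg (by norm_num : (1/2:ℝ) - 1 < 0)]
            linarith
    have hjsum : ∑ j ∈ Finset.range (N+1), (β*3^(j+1)*A)^p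
        * ((evt fun σ => β*3^j*A < ‖SS y σ‖).card : ℝ) ≤ 2^N * (β*A)^p := by
      have hterm : ∀ j ∈ Finset.range (N+1), (β*3^(j+1)*A)^p
          * ((evt fun σ => β*3^j*A < ‖SS y σ‖).card : ℝ)
          ≤ (β*A)^p * (2^N/β) * (3:ℝ)^p * ((3:ℝ)^p * (4/β))^j := by
        intro j _
        have hrw : (β*3^(j+1)*A)^p = (β*A)^p * ((3:ℝ)^p)^(j+1) := by
          rw [← rpow_pow_comm (j+1) p, ← Real.mul_rpow (by positivity) (by positivity)]
          congr 1
          ring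
        rw [hrw]
        have hcast := hcard j
        calc (β*A)^p * ((3:ℝ)^p)^(j+1) * ((evt fun σ => β*3^j*A < ‖SS y σ‖).card : ℝ)
            ≤ (β*A)^p * ((3:ℝ)^p)^(j+1) * ((4/β)^j * (2^N/β)) := by
              apply mul_le_mul_of_nonneg_left hcast (by positivity)
          _ = (β*A)^p * (2^N/β) * (3:ℝ)^p * ((3:ℝ)^p * (4/β))^j := by
              rw [mul_pow, pow_succ]
              ring
      calc ∑ j ∈ Finset.range (N+1), (β*3^(j+1)*A)^p
            * ((evt fun σ => β*3^j*A < ‖SS y σ‖).card : ℝ)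
          ≤ ∑ j ∈ Finset.range (N+1), (β*A)^p * (2^N/β) * (3:ℝ)^p * ((3:ℝ)^p * (4/β))^j :=
            Finset.sum_le_sum hterm
        _ = (β*A)^p * (2^N/β) * (3:ℝ)^p * ∑ j ∈ Finset.range (N+1), ((3:ℝ)^p * (4/β))^j := by
            rw [← Finset.mul_sum]
        _ ≤ (β*A)^p * (2^N/β) * (3:ℝ)^p * 2 := by
            apply mul_le_mul_of_nonneg_left hgeom (by positivity)
        _ ≤ 2^N * (β*A)^p := by
            have hβA : (0:ℝ) ≤ (β*A)^p := Real.rpow_nonneg (by positivity) p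
            have key : (2^N/β) * (3:ℝ)^p * 2 ≤ 2^N := by
              rw [div_mul_eq_mul_div, div_mul_eq_mul_div, div_le_iff₀ hβpos]
              nlinarith [mul_le_mul_of_nonneg_left
                (show 2*(3:ℝ)^p ≤ β by nlinarith) (le_of_lt h2N)]
            nlinarith
    -- conclude
    have htotal : ∑ σ : Fin N → Bool, ‖SS y σ‖^p ≤ 2 * (2^N * (β*A)^p) := by linarith
    have hfinal : (2^N : ℝ)⁻¹ * ∑ σ : Fin N → Bool, ‖SS y σ‖^p ≤ 2 * (β*A)^p := by
      rw [inv_mul_le_iff₀ h2N]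
      calc ∑ σ : Fin N → Bool, ‖SS y σ‖^p ≤ 2 * (2^N * (β*A)^p) := htotal
        _ = 2^N * (2 * (β*A)^p) := by ring
    refine hfinal.trans ?_
    have h2p : (2:ℝ) ≤ 2^p := by
      calc (2:ℝ) = 2^(1:ℝ) := (Real.rpow_one 2).symm
        _ ≤ 2^p := Real.rpow_le_rpow_of_exponent_le one_le_two hp
    calc 2 * (β*A)^p ≤ 2^p * (β*A)^p := by
          apply mul_le_mul_of_nonneg_right h2p (Real.rpow_nonneg (by positivity) p)
      _ = (2*(β*A))^p := (Real.mul_rpow (by norm_num) (by positivity)).symm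
      _ = (kconst p * A)^p := by
          congr 1
          rw [hβdef, kconst]
          ring

end Kahane

section Bmom
variable {X : Type*} [NormedAddCommGroup X] [NormedSpace ℝ X]

/-- first absolute moment of a Rademacher sum -/
def bnorm {ι : Type*} [DecidableEq ι] [Fintype ι] (v : ι → X) : ℝ :=
  ((2:ℝ)^(Fintype.card ι))⁻¹ * ∑ σ : ι → Bool, ‖∑ i, sg (σ i) • v i‖

/-- `p`-th moment of a Rademacher sum -/
def bmom (p : ℝ) {ι : Type*} [DecidableEq ι] [Fintype ι] (v : ι → X) : ℝ :=
  ((2:ℝ)^(Fintype.card ι))⁻¹ * ∑ σ : ι → Bool, ‖∑ i, sg (σ i) • v i‖ ^ p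

lemma bnorm_nonneg {ι : Type*} [DecidableEq ι] [Fintype ι] (v : ι → X) : 0 ≤ bnorm v :=
  mul_nonneg (by positivity) (Finset.sum_nonneg fun σ _ => norm_nonneg _)

lemma bmom_nonneg (p : ℝ) {ι : Type*} [DecidableEq ι] [Fintype ι] (v : ι → X) : 0 ≤ bmom p v :=
  mul_nonneg (by positivity)
    (Finset.sum_nonneg fun σ _ => Real.rpow_nonneg (norm_nonneg _) p)

lemma sum_reindex_equiv {ι κ : Type*} [DecidableEq ι] [DecidableEq κ] [Fintype ι] [Fintype κ] (e : ι ≃ κ) (v : κ → X)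
    (σ : ι → Bool) :
    ∑ i, sg (σ i) • v (e i) = ∑ k, sg ((Equiv.arrowCongr e (Equiv.refl Bool)) σ k) • v k := by
  rw [← Equiv.sum_comp e (fun k => sg ((Equiv.arrowCongr e (Equiv.refl Bool)) σ k) • v k)]
  refine Finset.sum_congr rfl fun i _ => ?_
  simp [Equiv.arrowCongr]

lemma bmom_reindex (p : ℝ) {ι κ : Type*} [DecidableEq ι] [DecidableEq κ] [Fintype ι] [Fintype κ] (e : ι ≃ κ) (v : κ → X) :
    bmom p (fun i => v (e i)) = bmom p v := by
  unfold bmom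
  rw [Fintype.card_congr e]
  congr 1
  apply Fintype.sum_equiv (Equiv.arrowCongr e (Equiv.refl Bool))
  intro σ
  rw [sum_reindex_equiv e v σ]

lemma bnorm_reindex {ι κ : Type*} [DecidableEq ι] [DecidableEq κ] [Fintype ι] [Fintype κ] (e : ι ≃ κ) (v : κ → X) :
    bnorm (fun i => v (e i)) = bnorm v := by
  unfold bnorm
  rw [Fintype.card_congr e]
  congr 1
  apply Fintype.sum_equiv (Equiv.arrowCongr e (Equiv.refl Bool))
  intro σ
  rw [sum_reindex_equiv e v σ]

lemma bmom_fin_eq (p : ℝ) {N : ℕ} (y : Fin N → X) :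
    bmom p y = ((2:ℝ)^N)⁻¹ * ∑ σ : Fin N → Bool, ‖SS y σ‖ ^ p := by
  unfold bmom SS
  rw [Fintype.card_fin]

lemma bnorm_fin_eq {N : ℕ} (y : Fin N → X) :
    bnorm y = ((2:ℝ)^N)⁻¹ * ∑ σ : Fin N → Bool, ‖SS y σ‖ := by
  unfold bnorm SS
  rw [Fintype.card_fin]

lemma kahane_bmom (p : ℝ) (hp : 1 ≤ p) {ι : Type*} [DecidableEq ι] [Fintype ι] (v : ι → X) :
    bmom p v ≤ (kconst p * bnorm v) ^ p := by
  set e := Fintype.equivFin ι with he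
  rw [← bmom_reindex p e.symm v, ← bnorm_reindex e.symm v]
  rw [bmom_fin_eq p (fun j => v (e.symm j)), bnorm_fin_eq (fun j => v (e.symm j))]
  exact kahane_fin p hp _

lemma bmom_sign (p : ℝ) {ι : Type*} [DecidableEq ι] [Fintype ι] (τ : ι → Bool) (v : ι → X) :
    bmom p (fun i => sg (τ i) • v i) = bmom p v := by
  unfold bmom
  congr 1
  have hinv : Function.Involutive (fun (σ : ι → Bool) => fun i => (σ i == τ i)) := by
    intro σ; funext i
    show ((σ i == τ i) == τ i) = σ i
    cases σ i <;> cases τ i <;> rfl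
  set T : Equiv.Perm (ι → Bool) := Function.Involutive.toPerm _ hinv with hTdef
  have hpt : ∀ σ : ι → Bool, ‖∑ i, sg (σ i) • (sg (τ i) • v i)‖^p
      = ‖∑ i, sg (T σ i) • v i‖^p := by
    intro σ
    have hs : (∑ i, sg (σ i) • (sg (τ i) • v i)) = ∑ i, sg (T σ i) • v i := by
      refine Finset.sum_congr rfl fun i _ => ?_
      rw [smul_smul]
      show (sg (σ i) * sg (τ i)) • v i = sg (σ i == τ i) • v i
      congr 1
      cases σ i <;> cases τ i <;> norm_num [sg]
    rw [hs]
  calc ∑ σ : ι → Bool, ‖∑ i, sg (σ i) • (sg (τ i) • v i)‖^p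
      = ∑ σ : ι → Bool, ‖∑ i, sg (T σ i) • v i‖^p :=
        Finset.sum_congr rfl fun σ _ => hpt σ
    _ = ∑ σ : ι → Bool, ‖∑ i, sg (σ i) • v i‖^p :=
        Equiv.sum_comp T (fun σ => ‖∑ i, sg (σ i) • v i‖^p)

lemma bmom_inj (p : ℝ) {ι κ : Type*} [DecidableEq ι] [DecidableEq κ] [Fintype ι] [Fintype κ] (e : ι → κ)
    (he : Function.Injective e) (w : κ → X) (hw : ∀ k, (∀ i, e i ≠ k) → w k = 0) :
    bmom p w = bmom p (fun i => w (e i)) := by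
  classical
  set R : ι ≃ Set.range e := Equiv.ofInjective e he with hR
  set E1 : ((Set.range e : Set κ) ⊕ ((Set.range e)ᶜ : Set κ)) ≃ κ := Equiv.Set.sumCompl _
    with hE1
  set EΩ : (κ → Bool) ≃ ((ι → Bool) × ((((Set.range e)ᶜ : Set κ)) → Bool)) :=
    (Equiv.arrowCongr E1.symm (Equiv.refl Bool)).trans
      ((Equiv.sumArrowEquivProdArrow _ _ Bool).trans
        (Equiv.prodCongr (Equiv.arrowCongr R.symm (Equiv.refl Bool)) (Equiv.refl _))) with hEΩ
  have hEΩ1 : ∀ (σ : κ → Bool) (i : ι), (EΩ σ).1 i = σ (e i) := by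
    intro σ i
    simp [hEΩ, hE1, hR, Equiv.sumArrowEquivProdArrow, Equiv.arrowCongr]
  have hinner : ∀ σ : κ → Bool, ∑ k, sg (σ k) • w k = ∑ i, sg (σ (e i)) • w (e i) := by
    intro σ
    have himg : ∑ k ∈ Finset.univ.image e, sg (σ k) • w k
        = ∑ i : ι, sg (σ (e i)) • w (e i) :=
      Finset.sum_image (fun i _ j _ h => he h)
    rw [← himg]
    apply (Finset.sum_subset (Finset.subset_univ _) _).symm
    intro k _ hk
    have hnk : ∀ i, e i ≠ k := fun i hik => hk (Finset.mem_image.mpr ⟨i, Finset.mem_univ i, hik⟩)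
    rw [hw k hnk, smul_zero]
  have hsum : ∑ σ : κ → Bool, ‖∑ k, sg (σ k) • w k‖ ^ p
      = (2:ℝ)^(Fintype.card (((Set.range e)ᶜ : Set κ)))
        * ∑ a : ι → Bool, ‖∑ i, sg (a i) • w (e i)‖ ^ p := by
    rw [← Equiv.sum_comp EΩ.symm (fun σ : κ → Bool => ‖∑ k, sg (σ k) • w k‖ ^ p)]
    rw [Fintype.sum_prod_type]
    have hterm : ∀ (a : ι → Bool) (b : (((Set.range e)ᶜ : Set κ)) → Bool),
        ‖∑ k, sg (EΩ.symm (a, b) k) • w k‖ ^ p = ‖∑ i, sg (a i) • w (e i)‖ ^ p := by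
      intro a b
      rw [hinner]
      congr 2
      refine Finset.sum_congr rfl fun i _ => ?_
      have h := hEΩ1 (EΩ.symm (a, b)) i
      rw [Equiv.apply_symm_apply] at h
      rw [← h]
    calc ∑ a : ι → Bool, ∑ b : (((Set.range e)ᶜ : Set κ)) → Bool,
          ‖∑ k, sg (EΩ.symm (a, b) k) • w k‖ ^ p
        = ∑ a : ι → Bool, ((2:ℝ)^(Fintype.card (((Set.range e)ᶜ : Set κ))))
            * ‖∑ i, sg (a i) • w (e i)‖ ^ p := by
          refine Finset.sum_congr rfl fun a _ => ?_
          rw [Finset.sum_congr rfl fun b _ => hterm a b, Finset.sum_const, Finset.card_univ,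
            Fintype.card_fun, Fintype.card_bool, nsmul_eq_mul]
          push_cast
          ring
      _ = _ := by rw [← Finset.mul_sum]
  have hcards : Fintype.card κ
      = Fintype.card ι + Fintype.card (((Set.range e)ᶜ : Set κ)) := by
    rw [← Fintype.card_congr E1, Fintype.card_sum, Fintype.card_congr R.symm]
  unfold bmom
  rw [hsum, hcards, pow_add]
  have h2c : ((2:ℝ)^(Fintype.card (((Set.range e)ᶜ : Set κ)))) ≠ 0 := by positivity
  field_simp

lemma bnorm_le_bmom_rpow (p : ℝ) (hp : 1 ≤ p) {ι : Type*} [DecidableEq ι] [Fintype ι] (v : ι → X) :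
    bnorm v ≤ (bmom p v) ^ (1/p) := by
  classical
  have hcard : ∑ _σ : ι → Bool, ((2:ℝ)^(Fintype.card ι))⁻¹ = 1 := by
    rw [Finset.sum_const, Finset.card_univ, Fintype.card_fun, Fintype.card_bool, nsmul_eq_mul]
    push_cast
    field_simp
  have h := Real.arith_mean_le_rpow_mean Finset.univ (fun _ => ((2:ℝ)^(Fintype.card ι))⁻¹)
    (fun σ : ι → Bool => ‖∑ i, sg (σ i) • v i‖) (fun _ _ => by positivity) hcard
    (fun σ _ => norm_nonneg _) hp
  unfold bnorm bmom
  rw [Finset.mul_sum, Finset.mul_sum]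
  exact h

/-- the comparison we use in the endgame -/
lemma bnorm_compare (p : ℝ) (hp : 1 ≤ p) {ι κ : Type*} [DecidableEq ι] [DecidableEq κ] [Fintype ι] [Fintype κ]
    (v : ι → X) (w : κ → X) (h : bmom p v = bmom p w) :
    bnorm v ≤ kconst p * bnorm w := by
  have hp0 : (0:ℝ) < p := lt_of_lt_of_le one_pos hp
  have h1 : bnorm v ≤ (bmom p v) ^ (1/p) := bnorm_le_bmom_rpow p hp v
  rw [h] at h1
  have h2 : (bmom p w) ^ (1/p) ≤ ((kconst p * bnorm w) ^ p) ^ (1/p) :=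
    Real.rpow_le_rpow (bmom_nonneg p w) (kahane_bmom p hp w) (by positivity)
  have h3 : ((kconst p * bnorm w) ^ p) ^ (1/p) = kconst p * bnorm w := by
    rw [← Real.rpow_mul (mul_nonneg (kconst_pos p).le (bnorm_nonneg w)),
      mul_one_div_cancel hp0.ne', Real.rpow_one]
  linarith

end Bmom



section Geometry2
variable {n : ℕ}

lemma dyadicCube_eq_pi (k : ℤ) (m : Fin n → ℤ) :
    dyadicCube n k m = Set.pi Set.univ
      (fun i => Set.Ico ((2:ℝ)^k * (m i : ℝ)) ((2:ℝ)^k * ((m i : ℝ) + 1))) := by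
  ext x
  simp [dyadicCube, Set.mem_pi, Set.mem_Ico]

lemma measurableSet_dyadicCube (k : ℤ) (m : Fin n → ℤ) :
    MeasurableSet (dyadicCube n k m) := by
  rw [dyadicCube_eq_pi]
  exact MeasurableSet.univ_pi fun i => measurableSet_Ico

lemma mem_dyadicCube_iff (k : ℤ) (m : Fin n → ℤ) (x : Fin n → ℝ) :
    x ∈ dyadicCube n k m ↔ ∀ i, ⌊x i / (2:ℝ)^k⌋ = m i := by
  have h2k : (0:ℝ) < (2:ℝ)^k := zpow_pos (by norm_num) k
  constructor
  · intro hx i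
    obtain ⟨h1, h2⟩ := hx i
    rw [Int.floor_eq_iff]
    constructor
    · rw [le_div_iff₀ h2k]; linarith
    · rw [div_lt_iff₀ h2k]; linarith
  · intro h i
    have h1 : (m i : ℝ) ≤ x i / (2:ℝ)^k := by rw [← h i]; exact Int.floor_le _
    have h2 : x i / (2:ℝ)^k < (m i : ℝ) + 1 := by rw [← h i]; exact Int.lt_floor_add_one _
    rw [le_div_iff₀ h2k] at h1
    rw [div_lt_iff₀ h2k] at h2
    constructor <;> linarith

lemma mem_dyadicCube_floor (k : ℤ) (x : Fin n → ℝ) :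
    x ∈ dyadicCube n k (fun i => ⌊x i / (2:ℝ)^k⌋) :=
  (mem_dyadicCube_iff k _ x).mpr fun _ => rfl

/-- the Haar sign at `x` depends only on the scale -/
lemma haar_smul {X : Type*} [NormedAddCommGroup X] [NormedSpace ℝ X]
    (hn : 0 < n) (q : ℤ × (Fin n → ℤ)) (x : Fin n → ℝ) (u : (Fin n → ℝ) → X) :
    haarFn n hn q x • u x
      = sg (decide (Even ⌊x ⟨0,hn⟩ / (2:ℝ)^(q.1-1)⌋))
          • Set.indicator (dyadicCube n q.1 q.2) u x := by
  by_cases hx : x ∈ dyadicCube n q.1 q.2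
  · rw [haarFn, Set.indicator_of_mem hx, Set.indicator_of_mem hx]
    congr 1
    set t := x ⟨0,hn⟩ with ht
    set k := q.1
    set m0 := q.2 ⟨0,hn⟩ with hm0
    set d := (2:ℝ)^(k-1) with hd
    have hdpos : (0:ℝ) < d := zpow_pos (by norm_num) _
    have h2k : (2:ℝ)^k = d * 2 := by
      rw [hd, ← zpow_add_one₀ (by norm_num : (2:ℝ) ≠ 0)]
      congr 1
      ring
    obtain ⟨h1, h2⟩ := hx ⟨0,hn⟩
    rw [← ht, ← hm0, h2k] at h1 h2
    have hf1 : (2*m0 : ℤ) ≤ ⌊t/d⌋ := by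
      rw [Int.le_floor]
      push_cast
      rw [le_div_iff₀ hdpos]
      nlinarith
    have hf2 : ⌊t/d⌋ < 2*m0+2 := by
      rw [Int.floor_lt]
      push_cast
      rw [div_lt_iff₀ hdpos]
      nlinarith
    have key : (t < (2:ℝ)^k * (m0:ℝ) + d) ↔ Even ⌊t/d⌋ := by
      constructor
      · intro h
        have hf3 : ⌊t/d⌋ < 2*m0+1 := by
          rw [Int.floor_lt]
          push_cast
          rw [div_lt_iff₀ hdpos]
          rw [h2k] at h
          nlinarith
        have hfe : ⌊t/d⌋ = 2*m0 := by omega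
        exact ⟨m0, by omega⟩
      · intro hev
        obtain ⟨r, hr⟩ := hev
        have hfe : ⌊t/d⌋ = 2*m0 := by omega
        have h4 := Int.lt_floor_add_one (t/d)
        rw [hfe] at h4
        push_cast at h4
        rw [div_lt_iff₀ hdpos] at h4
        rw [h2k]
        nlinarith
    by_cases hc : t < (2:ℝ)^k * (m0:ℝ) + d
    · rw [if_pos hc, sg, if_pos (by simpa using key.mp hc)]
    · rw [if_neg hc, sg, if_neg (by simpa using fun h => hc (key.mpr h))]
  · rw [haarFn, Set.indicator_of_notMem hx, Set.indicator_of_notMem hx, zero_smul, smul_zero]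

end Geometry2

section Plumbing
variable {α : Type*} [MeasurableSpace α] {μ : Measure α}
variable {X : Type*} [NormedAddCommGroup X] [NormedSpace ℝ X]

lemma eLpNorm_toReal_rpow_eq_integral {p : ℝ} (hp : 1 ≤ p) {f : α → X}
    (hf : MemLp f (ENNReal.ofReal p) μ) :
    ((eLpNorm f (ENNReal.ofReal p) μ).toReal) ^ p = ∫ a, ‖f a‖ ^ p ∂μ := by
  have hp0 : (0:ℝ) < p := lt_of_lt_of_le one_pos hp
  have h0 : ENNReal.ofReal p ≠ 0 := by
    simp [ENNReal.ofReal_eq_zero, not_le, hp0]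
  have htop : ENNReal.ofReal p ≠ ∞ := ENNReal.ofReal_ne_top
  rw [hf.eLpNorm_eq_integral_rpow_norm h0 htop]
  rw [ENNReal.toReal_ofReal (by positivity)]
  rw [ENNReal.toReal_ofReal hp0.le]
  rw [← Real.rpow_mul (integral_nonneg fun a => Real.rpow_nonneg (norm_nonneg _) _)]
  rw [inv_mul_cancel₀ hp0.ne', Real.rpow_one]

lemma toLp_finset_sum {P : ℝ≥0∞} {ι : Type*} (s : Finset ι) (g : ι → α → X)
    (hg : ∀ a, MemLp (g a) P μ) (h : MemLp (fun x => ∑ a ∈ s, g a x) P μ) :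
    h.toLp (fun x => ∑ a ∈ s, g a x) = ∑ a ∈ s, (hg a).toLp (g a) := by
  classical
  induction s using Finset.induction with
  | empty =>
    rw [Finset.sum_empty]
    have h2 : h.toLp _ = (MemLp.zero : MemLp (0 : α → X) P μ).toLp 0 :=
      MemLp.toLp_congr _ _ (by simp; rfl)
    rw [h2, MemLp.toLp_zero]
  | insert a s ha ih =>
    have hs : MemLp (fun x => ∑ b ∈ s, g b x) P μ := memLp_finset_sum s fun b _ => hg b
    have hadd : MemLp ((g a) + fun x => ∑ b ∈ s, g b x) P μ := (hg a).add hs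
    have h2 : h.toLp _ = hadd.toLp _ :=
      MemLp.toLp_congr _ _ (by
        filter_upwards with x
        rw [Finset.sum_insert ha]
        rfl)
    rw [Finset.sum_insert ha, h2, MemLp.toLp_add, ih hs]
    exact hs

lemma norm_toLp_eq {P : ℝ≥0∞} {f : α → X} (hf : MemLp f P μ) [Fact (1 ≤ P)] :
    ‖hf.toLp f‖ = (eLpNorm f P μ).toReal :=
  Lp.norm_toLp f hf

end Plumbing


section MainAux

lemma sgn_coe {ι : Type*} [DecidableEq ι] (s : Finset ι) (σ : {i // i ∈ s} → Bool)
    (i : {i // i ∈ s}) : sgn s σ i.1 = sg (σ i) := by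
  unfold sgn sg
  rw [dif_pos i.2, Subtype.coe_eta]

lemma sum_group {A B M : Type*} [DecidableEq B] [AddCommMonoid M] (S : Finset A)
    (K : Finset B) (g : A → B) (hg : ∀ a ∈ S, g a ∈ K) (F : A → M) :
    ∑ a ∈ S, F a = ∑ k ∈ K.attach, ∑ a ∈ S.filter (fun a => g a = k.1), F a := by
  rw [Finset.sum_attach K (fun k => ∑ a ∈ S.filter (fun a => g a = k), F a)]
  exact (Finset.sum_fiberwise_of_maps_to hg F).symm

end MainAux

/-- Sign-invariance: the randomized `L^p` norms of `∑_k ε_k ∑_{Q∈Δ_{2^k}} 1_Q u_Q`,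
`∑_k ε_k ∑_{Q∈Δ_{2^k}} h_Q u_Q` and `∑_Q ε_Q 1_Q u_Q` are pairwise comparable,
with constants depending only on `p`. -/
theorem sign_invariance (n : ℕ) (hn : 0 < n) {X : Type*}
    [NormedAddCommGroup X] [NormedSpace ℝ X] (p : ℝ) (hp : 1 ≤ p) :
    ∃ C : ℝ, 0 < C ∧
      ∀ (S : Finset (ℤ × (Fin n → ℤ))) (u : ℤ × (Fin n → ℤ) → (Fin n → ℝ) → X),
        (∀ q, MemLp (u q) (ENNReal.ofReal p) volume) →
        (∀ q ∉ S, u q = 0) →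
        let K := S.image Prod.fst
        let E₁ := ((2 : ℝ) ^ K.card)⁻¹ * ∑ σ : {k // k ∈ K} → Bool,
          (eLpNorm (fun x => ∑ q ∈ S, sgn K σ q.1 •
            Set.indicator (dyadicCube n q.1 q.2) (u q) x) (ENNReal.ofReal p) volume).toReal
        let E₂ := ((2 : ℝ) ^ K.card)⁻¹ * ∑ σ : {k // k ∈ K} → Bool,
          (eLpNorm (fun x => ∑ q ∈ S, (sgn K σ q.1 * haarFn n hn q x) •
            u q x) (ENNReal.ofReal p) volume).toReal
        let E₃ := ((2 : ℝ) ^ S.card)⁻¹ * ∑ σ : {q // q ∈ S} → Bool,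
          (eLpNorm (fun x => ∑ q ∈ S, sgn S σ q •
            Set.indicator (dyadicCube n q.1 q.2) (u q) x) (ENNReal.ofReal p) volume).toReal
        E₁ ≤ C * E₂ ∧ E₂ ≤ C * E₁ ∧ E₂ ≤ C * E₃ ∧ E₃ ≤ C * E₂ ∧
          E₁ ≤ C * E₃ ∧ E₃ ≤ C * E₁ := by
  classical
  refine ⟨kconst p, kconst_pos p, ?_⟩
  intro S u hu _hu0
  intro K E₁ E₂ E₃
  have hK : K = S.image Prod.fst := rfl
  have hp0 : (0:ℝ) < p := lt_of_lt_of_le one_pos hp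
  have hpp0 : (ENNReal.ofReal p) ≠ 0 := by simp [ENNReal.ofReal_eq_zero, not_le, hp0]
  have hpptop : (ENNReal.ofReal p) ≠ ∞ := ENNReal.ofReal_ne_top
  haveI hfact : Fact (1 ≤ ENNReal.ofReal p) := ⟨ENNReal.one_le_ofReal.mpr hp⟩
  have hKmem : ∀ q ∈ S, q.1 ∈ K := fun q hq => hK ▸ Finset.mem_image_of_mem Prod.fst hq
  -- membership in ℒp
  have hw : ∀ q : ℤ × (Fin n → ℤ),
      MemLp (fun x => Set.indicator (dyadicCube n q.1 q.2) (u q) x) (ENNReal.ofReal p) volume :=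
    fun q => (hu q).indicator (measurableSet_dyadicCube q.1 q.2)
  have hwh : ∀ q : ℤ × (Fin n → ℤ),
      MemLp (fun x => haarFn n hn q x • u q x) (ENNReal.ofReal p) volume := by
    intro q
    set c : ℝ := (2:ℝ)^q.1 * (q.2 ⟨0,hn⟩ : ℝ) + (2:ℝ)^(q.1-1) with hc
    set A : Set (Fin n → ℝ) := dyadicCube n q.1 q.2 ∩ {y | y ⟨0,hn⟩ < c} with hAdef
    set B : Set (Fin n → ℝ) := dyadicCube n q.1 q.2 ∩ {y | y ⟨0,hn⟩ < c}ᶜ with hBdef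
    have hA : MeasurableSet A :=
      (measurableSet_dyadicCube _ _).inter (measurableSet_lt (measurable_pi_apply _)
        measurable_const)
    have hB : MeasurableSet B :=
      (measurableSet_dyadicCube _ _).inter (measurableSet_lt (measurable_pi_apply _)
        measurable_const).compl
    have hsplit : (fun x => haarFn n hn q x • u q x)
        = fun x => (A.indicator (u q) x) - (B.indicator (u q) x) := by
      funext x
      rw [haarFn]
      by_cases hx : x ∈ dyadicCube n q.1 q.2
      · rw [Set.indicator_of_mem hx]
        by_cases hlt : x ⟨0,hn⟩ < c
        · have hxA : x ∈ A := ⟨hx, hlt⟩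
          have hxB : x ∉ B := fun hB' => hB'.2 hlt
          rw [if_pos hlt, one_smul, Set.indicator_of_mem hxA, Set.indicator_of_notMem hxB,
            sub_zero]
        · have hxA : x ∉ A := fun hA' => hlt hA'.2
          have hxB : x ∈ B := ⟨hx, hlt⟩
          rw [if_neg hlt, Set.indicator_of_notMem hxA, Set.indicator_of_mem hxB, zero_sub,
            neg_one_smul]
      · have hxA : x ∉ A := fun h => hx h.1
        have hxB : x ∉ B := fun h => hx h.1
        rw [Set.indicator_of_notMem hx, zero_smul, Set.indicator_of_notMem hxA,
          Set.indicator_of_notMem hxB, sub_zero]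
    rw [hsplit]
    exact ((hu q).indicator hA).sub ((hu q).indicator hB)
  -- the three random integrands are in ℒp
  have hf1 : ∀ σ : {k // k ∈ K} → Bool,
      MemLp (fun x => ∑ q ∈ S, sgn K σ q.1 •
        Set.indicator (dyadicCube n q.1 q.2) (u q) x) (ENNReal.ofReal p) volume :=
    fun σ => memLp_finset_sum S (fun q _ => (hw q).const_smul _)
  have hf2 : ∀ σ : {k // k ∈ K} → Bool,
      MemLp (fun x => ∑ q ∈ S, (sgn K σ q.1 * haarFn n hn q x) • u q x)
        (ENNReal.ofReal p) volume := by
    intro σ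
    refine memLp_finset_sum S (fun q _ => ?_)
    have h : (fun x => (sgn K σ q.1 * haarFn n hn q x) • u q x)
        = fun x => sgn K σ q.1 • (haarFn n hn q x • u q x) := by
      funext x; rw [← smul_smul]
    rw [h]
    exact (hwh q).const_smul _
  have hf3 : ∀ σ : {q // q ∈ S} → Bool,
      MemLp (fun x => ∑ q ∈ S, sgn S σ q •
        Set.indicator (dyadicCube n q.1 q.2) (u q) x) (ENNReal.ofReal p) volume :=
    fun σ => memLp_finset_sum S (fun q _ => (hw q).const_smul _)
  -- grouped functions
  set WK : {k // k ∈ K} → (Fin n → ℝ) → X :=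
    fun k x => ∑ q ∈ S.filter (fun q => q.1 = k.1),
      Set.indicator (dyadicCube n q.1 q.2) (u q) x with hWKdef
  set WH : {k // k ∈ K} → (Fin n → ℝ) → X :=
    fun k x => ∑ q ∈ S.filter (fun q => q.1 = k.1), haarFn n hn q x • u q x with hWHdef
  have hWKx : ∀ k x, WK k x = ∑ q ∈ S.filter (fun q => q.1 = k.1),
      Set.indicator (dyadicCube n q.1 q.2) (u q) x := fun k x => rfl
  have hWHx : ∀ k x, WH k x = ∑ q ∈ S.filter (fun q => q.1 = k.1),
      haarFn n hn q x • u q x := fun k x => rfl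
  have hWK : ∀ k, MemLp (WK k) (ENNReal.ofReal p) volume :=
    fun k => memLp_finset_sum _ (fun q _ => hw q)
  have hWH : ∀ k, MemLp (WH k) (ENNReal.ofReal p) volume :=
    fun k => memLp_finset_sum _ (fun q _ => hwh q)
  set V1 : {k // k ∈ K} → Lp X (ENNReal.ofReal p) volume :=
    fun k => (hWK k).toLp (WK k) with hV1def
  set V2 : {k // k ∈ K} → Lp X (ENNReal.ofReal p) volume :=
    fun k => (hWH k).toLp (WH k) with hV2def
  set V3 : {q // q ∈ S} → Lp X (ENNReal.ofReal p) volume :=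
    fun q => (hw q.1).toLp _ with hV3def
  -- pointwise grouping identities
  have hgrp1 : ∀ (σ : {k // k ∈ K} → Bool) (x : Fin n → ℝ),
      (∑ q ∈ S, sgn K σ q.1 • Set.indicator (dyadicCube n q.1 q.2) (u q) x)
        = ∑ k ∈ K.attach, sg (σ k) • WK k x := by
    intro σ x
    rw [sum_group S K Prod.fst hKmem
      (fun q => sgn K σ q.1 • Set.indicator (dyadicCube n q.1 q.2) (u q) x)]
    refine Finset.sum_congr rfl fun k _ => ?_
    rw [hWKx, Finset.smul_sum]
    refine Finset.sum_congr rfl fun q hq => ?_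
    have hq1 : q.1 = k.1 := (Finset.mem_filter.mp hq).2
    rw [show sgn K σ q.1 = sg (σ k) from by rw [hq1, sgn_coe K σ k]]
  have hgrp2 : ∀ (σ : {k // k ∈ K} → Bool) (x : Fin n → ℝ),
      (∑ q ∈ S, (sgn K σ q.1 * haarFn n hn q x) • u q x)
        = ∑ k ∈ K.attach, sg (σ k) • WH k x := by
    intro σ x
    rw [sum_group S K Prod.fst hKmem (fun q => (sgn K σ q.1 * haarFn n hn q x) • u q x)]
    refine Finset.sum_congr rfl fun k _ => ?_
    rw [hWHx, Finset.smul_sum]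
    refine Finset.sum_congr rfl fun q hq => ?_
    have hq1 : q.1 = k.1 := (Finset.mem_filter.mp hq).2
    rw [← smul_smul, show sgn K σ q.1 = sg (σ k) from by rw [hq1, sgn_coe K σ k]]
  have hgrp3 : ∀ (σ : {q // q ∈ S} → Bool) (x : Fin n → ℝ),
      (∑ q ∈ S, sgn S σ q • Set.indicator (dyadicCube n q.1 q.2) (u q) x)
        = ∑ q ∈ S.attach, sg (σ q) •
            Set.indicator (dyadicCube n q.1.1 q.1.2) (u q.1) x := by
    intro σ x
    rw [← Finset.sum_attach S
      (fun q => sgn S σ q • Set.indicator (dyadicCube n q.1 q.2) (u q) x)]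
    exact Finset.sum_congr rfl fun q _ => by rw [sgn_coe S σ q]
  -- MemLp of the grouped sums
  have hg1 : ∀ σ : {k // k ∈ K} → Bool,
      MemLp (fun x => ∑ k ∈ K.attach, sg (σ k) • WK k x) (ENNReal.ofReal p) volume :=
    fun σ => memLp_finset_sum _ (fun k _ => (hWK k).const_smul _)
  have hg2 : ∀ σ : {k // k ∈ K} → Bool,
      MemLp (fun x => ∑ k ∈ K.attach, sg (σ k) • WH k x) (ENNReal.ofReal p) volume :=
    fun σ => memLp_finset_sum _ (fun k _ => (hWH k).const_smul _)
  have hg3 : ∀ σ : {q // q ∈ S} → Bool,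
      MemLp (fun x => ∑ q ∈ S.attach, sg (σ q) •
        Set.indicator (dyadicCube n q.1.1 q.1.2) (u q.1) x) (ENNReal.ofReal p) volume :=
    fun σ => memLp_finset_sum _ (fun q _ => (hw q.1).const_smul _)
  -- Lp identities
  have hLp1 : ∀ σ : {k // k ∈ K} → Bool,
      (hf1 σ).toLp _ = ∑ k ∈ K.attach, sg (σ k) • V1 k := by
    intro σ
    have h1 : (hf1 σ).toLp _ = (hg1 σ).toLp _ :=
      MemLp.toLp_congr _ _ (Filter.EventuallyEq.of_eq (funext (hgrp1 σ)))
    rw [h1, toLp_finset_sum K.attach (fun k x => sg (σ k) • WK k x)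
      (fun k => (hWK k).const_smul _) (hg1 σ)]
    exact Finset.sum_congr rfl fun k _ => MemLp.toLp_const_smul (sg (σ k)) (hWK k)
  have hLp2 : ∀ σ : {k // k ∈ K} → Bool,
      (hf2 σ).toLp _ = ∑ k ∈ K.attach, sg (σ k) • V2 k := by
    intro σ
    have h1 : (hf2 σ).toLp _ = (hg2 σ).toLp _ :=
      MemLp.toLp_congr _ _ (Filter.EventuallyEq.of_eq (funext (hgrp2 σ)))
    rw [h1, toLp_finset_sum K.attach (fun k x => sg (σ k) • WH k x)
      (fun k => (hWH k).const_smul _) (hg2 σ)]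
    exact Finset.sum_congr rfl fun k _ => MemLp.toLp_const_smul (sg (σ k)) (hWH k)
  have hLp3 : ∀ σ : {q // q ∈ S} → Bool,
      (hf3 σ).toLp _ = ∑ q ∈ S.attach, sg (σ q) • V3 q := by
    intro σ
    have h1 : (hf3 σ).toLp _ = (hg3 σ).toLp _ :=
      MemLp.toLp_congr _ _ (Filter.EventuallyEq.of_eq (funext (hgrp3 σ)))
    rw [h1, toLp_finset_sum S.attach
      (fun q x => sg (σ q) • Set.indicator (dyadicCube n q.1.1 q.1.2) (u q.1) x)
      (fun q => (hw q.1).const_smul _) (hg3 σ)]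
    exact Finset.sum_congr rfl fun q _ => MemLp.toLp_const_smul (sg (σ q)) (hw q.1)
  -- norms
  have hnorm1 : ∀ σ : {k // k ∈ K} → Bool,
      (eLpNorm (fun x => ∑ q ∈ S, sgn K σ q.1 •
        Set.indicator (dyadicCube n q.1 q.2) (u q) x) (ENNReal.ofReal p) volume).toReal
      = ‖∑ i : {k // k ∈ K}, sg (σ i) • V1 i‖ := by
    intro σ
    rw [← norm_toLp_eq (hf1 σ), hLp1 σ, ← Finset.univ_eq_attach]
  have hnorm2 : ∀ σ : {k // k ∈ K} → Bool,
      (eLpNorm (fun x => ∑ q ∈ S, (sgn K σ q.1 * haarFn n hn q x) • u q x)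
        (ENNReal.ofReal p) volume).toReal
      = ‖∑ i : {k // k ∈ K}, sg (σ i) • V2 i‖ := by
    intro σ
    rw [← norm_toLp_eq (hf2 σ), hLp2 σ, ← Finset.univ_eq_attach]
  have hnorm3 : ∀ σ : {q // q ∈ S} → Bool,
      (eLpNorm (fun x => ∑ q ∈ S, sgn S σ q •
        Set.indicator (dyadicCube n q.1 q.2) (u q) x) (ENNReal.ofReal p) volume).toReal
      = ‖∑ i : {q // q ∈ S}, sg (σ i) • V3 i‖ := by
    intro σ
    rw [← norm_toLp_eq (hf3 σ), hLp3 σ, ← Finset.univ_eq_attach]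
  -- E values as bnorms
  have hE1v : E₁ = bnorm V1 := by
    show ((2 : ℝ) ^ K.card)⁻¹ * ∑ σ : {k // k ∈ K} → Bool,
      (eLpNorm (fun x => ∑ q ∈ S, sgn K σ q.1 •
        Set.indicator (dyadicCube n q.1 q.2) (u q) x) (ENNReal.ofReal p) volume).toReal
      = bnorm V1
    unfold bnorm
    rw [Fintype.card_coe]
    congr 1
    exact Finset.sum_congr rfl fun σ _ => hnorm1 σ
  have hE2v : E₂ = bnorm V2 := by
    show ((2 : ℝ) ^ K.card)⁻¹ * ∑ σ : {k // k ∈ K} → Bool,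
      (eLpNorm (fun x => ∑ q ∈ S, (sgn K σ q.1 * haarFn n hn q x) • u q x)
        (ENNReal.ofReal p) volume).toReal = bnorm V2
    unfold bnorm
    rw [Fintype.card_coe]
    congr 1
    exact Finset.sum_congr rfl fun σ _ => hnorm2 σ
  have hE3v : E₃ = bnorm V3 := by
    show ((2 : ℝ) ^ S.card)⁻¹ * ∑ σ : {q // q ∈ S} → Bool,
      (eLpNorm (fun x => ∑ q ∈ S, sgn S σ q •
        Set.indicator (dyadicCube n q.1 q.2) (u q) x) (ENNReal.ofReal p) volume).toReal
      = bnorm V3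
    unfold bnorm
    rw [Fintype.card_coe]
    congr 1
    exact Finset.sum_congr rfl fun σ _ => hnorm3 σ
  -- moments as integrals
  have hint1 : ∀ σ : {k // k ∈ K} → Bool,
      Integrable (fun x => ‖∑ k ∈ K.attach, sg (σ k) • WK k x‖ ^ p) volume := by
    intro σ
    have h := (hg1 σ).integrable_norm_rpow hpp0 hpptop
    rwa [ENNReal.toReal_ofReal hp0.le] at h
  have hint2 : ∀ σ : {k // k ∈ K} → Bool,
      Integrable (fun x => ‖∑ k ∈ K.attach, sg (σ k) • WH k x‖ ^ p) volume := by
    intro σ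
    have h := (hg2 σ).integrable_norm_rpow hpp0 hpptop
    rwa [ENNReal.toReal_ofReal hp0.le] at h
  have hint3 : ∀ σ : {q // q ∈ S} → Bool,
      Integrable (fun x => ‖∑ q ∈ S.attach, sg (σ q) •
        Set.indicator (dyadicCube n q.1.1 q.1.2) (u q.1) x‖ ^ p) volume := by
    intro σ
    have h := (hg3 σ).integrable_norm_rpow hpp0 hpptop
    rwa [ENNReal.toReal_ofReal hp0.le] at h
  have hmomnorm1 : ∀ σ : {k // k ∈ K} → Bool,
      ‖∑ i : {k // k ∈ K}, sg (σ i) • V1 i‖ ^ p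
        = ∫ x, ‖∑ k ∈ K.attach, sg (σ k) • WK k x‖ ^ p := by
    intro σ
    rw [Finset.univ_eq_attach, ← hLp1 σ, norm_toLp_eq (hf1 σ),
      eLpNorm_toReal_rpow_eq_integral hp (hf1 σ)]
    exact integral_congr_ae (Filter.EventuallyEq.of_eq (funext fun x => by rw [hgrp1 σ x]))
  have hmomnorm2 : ∀ σ : {k // k ∈ K} → Bool,
      ‖∑ i : {k // k ∈ K}, sg (σ i) • V2 i‖ ^ p
        = ∫ x, ‖∑ k ∈ K.attach, sg (σ k) • WH k x‖ ^ p := by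
    intro σ
    rw [Finset.univ_eq_attach, ← hLp2 σ, norm_toLp_eq (hf2 σ),
      eLpNorm_toReal_rpow_eq_integral hp (hf2 σ)]
    exact integral_congr_ae (Filter.EventuallyEq.of_eq (funext fun x => by rw [hgrp2 σ x]))
  have hmomnorm3 : ∀ σ : {q // q ∈ S} → Bool,
      ‖∑ i : {q // q ∈ S}, sg (σ i) • V3 i‖ ^ p
        = ∫ x, ‖∑ q ∈ S.attach, sg (σ q) •
            Set.indicator (dyadicCube n q.1.1 q.1.2) (u q.1) x‖ ^ p := by
    intro σ
    rw [Finset.univ_eq_attach, ← hLp3 σ, norm_toLp_eq (hf3 σ),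
      eLpNorm_toReal_rpow_eq_integral hp (hf3 σ)]
    exact integral_congr_ae (Filter.EventuallyEq.of_eq (funext fun x => by rw [hgrp3 σ x]))
  have hbmx1 : ∀ x : Fin n → ℝ, bmom p (fun k : {k // k ∈ K} => WK k x)
      = ((2:ℝ)^K.card)⁻¹ * ∑ σ : {k // k ∈ K} → Bool,
          ‖∑ k ∈ K.attach, sg (σ k) • WK k x‖ ^ p := by
    intro x
    unfold bmom
    rw [Fintype.card_coe, Finset.univ_eq_attach]
  have hbmx2 : ∀ x : Fin n → ℝ, bmom p (fun k : {k // k ∈ K} => WH k x)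
      = ((2:ℝ)^K.card)⁻¹ * ∑ σ : {k // k ∈ K} → Bool,
          ‖∑ k ∈ K.attach, sg (σ k) • WH k x‖ ^ p := by
    intro x
    unfold bmom
    rw [Fintype.card_coe, Finset.univ_eq_attach]
  have hbmx3 : ∀ x : Fin n → ℝ, bmom p (fun q : {q // q ∈ S} =>
        Set.indicator (dyadicCube n q.1.1 q.1.2) (u q.1) x)
      = ((2:ℝ)^S.card)⁻¹ * ∑ σ : {q // q ∈ S} → Bool,
          ‖∑ q ∈ S.attach, sg (σ q) •
            Set.indicator (dyadicCube n q.1.1 q.1.2) (u q.1) x‖ ^ p := by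
    intro x
    unfold bmom
    rw [Fintype.card_coe, Finset.univ_eq_attach]
  have hbm1 : bmom p V1 = ∫ x, bmom p (fun k : {k // k ∈ K} => WK k x) := by
    have h0 : bmom p V1 = ((2:ℝ)^K.card)⁻¹ * ∑ σ : {k // k ∈ K} → Bool,
        ‖∑ i : {k // k ∈ K}, sg (σ i) • V1 i‖ ^ p := by
      unfold bmom
      rw [Fintype.card_coe]
    rw [h0]
    calc ((2:ℝ)^K.card)⁻¹ * ∑ σ : {k // k ∈ K} → Bool, ‖∑ i, sg (σ i) • V1 i‖ ^ p
        = ((2:ℝ)^K.card)⁻¹ * ∑ σ : {k // k ∈ K} → Bool,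
            ∫ x, ‖∑ k ∈ K.attach, sg (σ k) • WK k x‖ ^ p :=
          by rw [Finset.sum_congr rfl fun σ _ => hmomnorm1 σ]
      _ = ((2:ℝ)^K.card)⁻¹ * ∫ x, ∑ σ : {k // k ∈ K} → Bool,
            ‖∑ k ∈ K.attach, sg (σ k) • WK k x‖ ^ p := by
          rw [integral_finset_sum Finset.univ (fun σ _ => hint1 σ)]
      _ = ∫ x, ((2:ℝ)^K.card)⁻¹ * ∑ σ : {k // k ∈ K} → Bool,
            ‖∑ k ∈ K.attach, sg (σ k) • WK k x‖ ^ p := (integral_const_mul _ _).symm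
      _ = ∫ x, bmom p (fun k : {k // k ∈ K} => WK k x) :=
          integral_congr_ae (Filter.EventuallyEq.of_eq (funext fun x => (hbmx1 x).symm))
  have hbm2 : bmom p V2 = ∫ x, bmom p (fun k : {k // k ∈ K} => WH k x) := by
    have h0 : bmom p V2 = ((2:ℝ)^K.card)⁻¹ * ∑ σ : {k // k ∈ K} → Bool,
        ‖∑ i : {k // k ∈ K}, sg (σ i) • V2 i‖ ^ p := by
      unfold bmom
      rw [Fintype.card_coe]
    rw [h0]
    calc ((2:ℝ)^K.card)⁻¹ * ∑ σ : {k // k ∈ K} → Bool, ‖∑ i, sg (σ i) • V2 i‖ ^ p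
        = ((2:ℝ)^K.card)⁻¹ * ∑ σ : {k // k ∈ K} → Bool,
            ∫ x, ‖∑ k ∈ K.attach, sg (σ k) • WH k x‖ ^ p :=
          by rw [Finset.sum_congr rfl fun σ _ => hmomnorm2 σ]
      _ = ((2:ℝ)^K.card)⁻¹ * ∫ x, ∑ σ : {k // k ∈ K} → Bool,
            ‖∑ k ∈ K.attach, sg (σ k) • WH k x‖ ^ p := by
          rw [integral_finset_sum Finset.univ (fun σ _ => hint2 σ)]
      _ = ∫ x, ((2:ℝ)^K.card)⁻¹ * ∑ σ : {k // k ∈ K} → Bool,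
            ‖∑ k ∈ K.attach, sg (σ k) • WH k x‖ ^ p := (integral_const_mul _ _).symm
      _ = ∫ x, bmom p (fun k : {k // k ∈ K} => WH k x) :=
          integral_congr_ae (Filter.EventuallyEq.of_eq (funext fun x => (hbmx2 x).symm))
  have hbm3 : bmom p V3 = ∫ x, bmom p (fun q : {q // q ∈ S} =>
      Set.indicator (dyadicCube n q.1.1 q.1.2) (u q.1) x) := by
    have h0 : bmom p V3 = ((2:ℝ)^S.card)⁻¹ * ∑ σ : {q // q ∈ S} → Bool,
        ‖∑ i : {q // q ∈ S}, sg (σ i) • V3 i‖ ^ p := by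
      unfold bmom
      rw [Fintype.card_coe]
    rw [h0]
    calc ((2:ℝ)^S.card)⁻¹ * ∑ σ : {q // q ∈ S} → Bool, ‖∑ i, sg (σ i) • V3 i‖ ^ p
        = ((2:ℝ)^S.card)⁻¹ * ∑ σ : {q // q ∈ S} → Bool,
            ∫ x, ‖∑ q ∈ S.attach, sg (σ q) •
              Set.indicator (dyadicCube n q.1.1 q.1.2) (u q.1) x‖ ^ p :=
          by rw [Finset.sum_congr rfl fun σ _ => hmomnorm3 σ]
      _ = ((2:ℝ)^S.card)⁻¹ * ∫ x, ∑ σ : {q // q ∈ S} → Bool,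
            ‖∑ q ∈ S.attach, sg (σ q) •
              Set.indicator (dyadicCube n q.1.1 q.1.2) (u q.1) x‖ ^ p := by
          rw [integral_finset_sum Finset.univ (fun σ _ => hint3 σ)]
      _ = ∫ x, ((2:ℝ)^S.card)⁻¹ * ∑ σ : {q // q ∈ S} → Bool,
            ‖∑ q ∈ S.attach, sg (σ q) •
              Set.indicator (dyadicCube n q.1.1 q.1.2) (u q.1) x‖ ^ p :=
          (integral_const_mul _ _).symm
      _ = _ :=
          integral_congr_ae (Filter.EventuallyEq.of_eq (funext fun x => (hbmx3 x).symm))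
  -- pointwise moment equalities
  have hpt21 : ∀ x : Fin n → ℝ, bmom p (fun k : {k // k ∈ K} => WH k x)
      = bmom p (fun k : {k // k ∈ K} => WK k x) := by
    intro x
    have hWHeq : (fun k : {k // k ∈ K} => WH k x)
        = fun k : {k // k ∈ K} =>
            sg (decide (Even ⌊x ⟨0,hn⟩ / (2:ℝ)^(k.1-1)⌋)) • WK k x := by
      funext k
      rw [hWHx, hWKx, Finset.smul_sum]
      refine Finset.sum_congr rfl fun q hq => ?_
      have hq1 : q.1 = k.1 := (Finset.mem_filter.mp hq).2
      have hsg : (decide (Even ⌊x ⟨0,hn⟩ / (2:ℝ)^(q.1-1)⌋))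
          = (decide (Even ⌊x ⟨0,hn⟩ / (2:ℝ)^(k.1-1)⌋)) := by rw [hq1]
      rw [haar_smul hn q x (u q), hsg]
    rw [hWHeq]
    exact bmom_sign p (fun k : {k // k ∈ K} => decide (Even ⌊x ⟨0,hn⟩ / (2:ℝ)^(k.1-1)⌋))
      (fun k => WK k x)
  have hpt31 : ∀ x : Fin n → ℝ, bmom p (fun q : {q // q ∈ S} =>
      Set.indicator (dyadicCube n q.1.1 q.1.2) (u q.1) x)
      = bmom p (fun k : {k // k ∈ K} => WK k x) := by
    intro x
    set qx : ℤ → ℤ × (Fin n → ℤ) := fun k => (k, fun i => ⌊x i / (2:ℝ)^k⌋) with hqxdef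
    set T : Finset ℤ := K.filter (fun k => qx k ∈ S) with hTdef
    have hxmem : ∀ k : ℤ, x ∈ dyadicCube n k (fun i => ⌊x i / (2:ℝ)^k⌋) :=
      fun k => mem_dyadicCube_floor k x
    have hzero : ∀ q : ℤ × (Fin n → ℤ), x ∈ dyadicCube n q.1 q.2 → q = qx q.1 := by
      intro q hq
      have h := (mem_dyadicCube_iff q.1 q.2 x).mp hq
      have : q.2 = fun i => ⌊x i / (2:ℝ)^q.1⌋ := by
        funext i; exact (h i).symm
      rw [hqxdef]
      exact Prod.ext rfl this
    have hWK_T : ∀ k : {k // k ∈ K}, k.1 ∈ T → WK k x = u (qx k.1) x := by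
      intro k hk
      rw [hWKx]
      rw [Finset.sum_eq_single (qx k.1)]
      · exact Set.indicator_of_mem (hxmem k.1) _
      · intro q hq hne
        refine Set.indicator_of_notMem (fun hmem => hne ?_) _
        rw [hzero q hmem, (Finset.mem_filter.mp hq).2]
      · intro habs
        exact absurd (Finset.mem_filter.mpr
          ⟨(Finset.mem_filter.mp hk).2, show (qx k.1).1 = k.1 from rfl⟩) habs
    have hWK_nT : ∀ k : {k // k ∈ K}, k.1 ∉ T → WK k x = 0 := by
      intro k hk
      rw [hWKx]
      refine Finset.sum_eq_zero fun q hq => ?_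
      refine Set.indicator_of_notMem (fun hmem => hk ?_) _
      rw [hTdef, Finset.mem_filter]
      refine ⟨k.2, ?_⟩
      have h1 := hzero q hmem
      have h2 : q.1 = k.1 := (Finset.mem_filter.mp hq).2
      rw [← h2, ← h1]
      exact (Finset.mem_filter.mp hq).1
    set e1 : {k // k ∈ T} → {k // k ∈ K} :=
      fun k => ⟨k.1, (Finset.mem_filter.mp k.2).1⟩ with he1def
    have he1inj : Function.Injective e1 := by
      intro a b h
      have h' : (e1 a).1 = (e1 b).1 := by rw [h]
      exact Subtype.ext h'
    set e2 : {k // k ∈ T} → {q // q ∈ S} :=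
      fun k => ⟨qx k.1, (Finset.mem_filter.mp k.2).2⟩ with he2def
    have he2inj : Function.Injective e2 := by
      intro a b h
      have h' : (e2 a).1.1 = (e2 b).1.1 := by rw [h]
      exact Subtype.ext h'
    have h1 : bmom p (fun k : {k // k ∈ K} => WK k x)
        = bmom p (fun k : {k // k ∈ T} => WK (e1 k) x) := by
      refine bmom_inj p e1 he1inj _ (fun k hk => hWK_nT k (fun hmem => ?_))
      exact (hk ⟨k.1, hmem⟩ (Subtype.ext rfl)).elim
    have h2 : bmom p (fun q : {q // q ∈ S} =>
        Set.indicator (dyadicCube n q.1.1 q.1.2) (u q.1) x)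
        = bmom p (fun k : {k // k ∈ T} =>
            Set.indicator (dyadicCube n (e2 k).1.1 (e2 k).1.2) (u (e2 k).1) x) := by
      refine bmom_inj p e2 he2inj _ (fun q hq => ?_)
      refine Set.indicator_of_notMem (fun hmem => ?_) _
      have hq1 := hzero q.1 hmem
      have hq1K : q.1.1 ∈ K := hKmem q.1 q.2
      have hq1S : qx q.1.1 ∈ S := by rw [← hq1]; exact q.2
      have hq1T : q.1.1 ∈ T := by
        rw [hTdef, Finset.mem_filter]; exact ⟨hq1K, hq1S⟩
      exact hq ⟨q.1.1, hq1T⟩ (Subtype.ext hq1.symm)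
    rw [h1, h2]
    congr 1
    funext k
    have hkT : (e1 k).1 ∈ T := k.2
    rw [hWK_T (e1 k) hkT]
    have : (e2 k).1 = qx k.1 := rfl
    rw [this]
    exact Set.indicator_of_mem (hxmem k.1) _
  -- moment equalities
  have hM21 : bmom p V2 = bmom p V1 := by
    rw [hbm1, hbm2]
    exact integral_congr_ae (Filter.EventuallyEq.of_eq (funext fun x => hpt21 x))
  have hM31 : bmom p V3 = bmom p V1 := by
    rw [hbm1, hbm3]
    exact integral_congr_ae (Filter.EventuallyEq.of_eq (funext fun x => hpt31 x))
  have hM23 : bmom p V2 = bmom p V3 := by rw [hM21, hM31]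
  -- conclude
  rw [hE1v, hE2v, hE3v]
  exact ⟨bnorm_compare p hp V1 V2 hM21.symm, bnorm_compare p hp V2 V1 hM21,
    bnorm_compare p hp V2 V3 hM23, bnorm_compare p hp V3 V2 hM23.symm,
    bnorm_compare p hp V1 V3 hM31.symm, bnorm_compare p hp V3 V1 hM31⟩
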